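/- arXiv:1305.5345 — 7 statements merged into one kernel-verified Lean document; each statement's English description precedes it below -/
import Mathlib

section
/- Let K ⊆ ℝ^d be a nonempty closed set that is regular (i.e., K equals the closure of its interior), nonconvex, and has path-connected interior. Then there exist points x, y, z in the interior of K such that the segment [x,y] lies in the interior of K, the segment [y,z] lies in the interior of K, but the segment [x,z] is not contained in K. -/
open Set Metric

section Aux

variable {E : Type*} [NormedAddCommGroup E] [NormedSpace ℝ E]

lemma aux_isCompact_segment (x y : E) : IsCompact (segment ℝ x y) := by
  rw [segment_eq_image]
  exact isCompact_Icc.image (by continuity)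

/-- A segment inside an open set can be perturbed at both endpoints. -/
lemma aux_seg_perturb {U : Set E} (hU : IsOpen U) {x y : E} (h : segment ℝ x y ⊆ U) :
    ∃ ε > 0, ∀ x' y' : E, dist x' x < ε → dist y' y < ε → segment ℝ x' y' ⊆ U := by
  obtain ⟨ε, hε, hsub⟩ := (aux_isCompact_segment x y).exists_thickening_subset_open hU h
  refine ⟨ε, hε, fun x' y' hx' hy' p hp => hsub ?_⟩
  rw [segment_eq_image] at hp
  obtain ⟨t, ht, rfl⟩ := hp
  rw [Metric.mem_thickening_iff]
  refine ⟨(1 - t) • x + t • y, by rw [segment_eq_image]; exact ⟨t, ht, rfl⟩, ?_⟩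
  have h1t : (0:ℝ) ≤ 1 - t := by linarith [ht.2]
  have hM1 : (1 - t) * dist x' x ≤ (1 - t) * max (dist x' x) (dist y' y) :=
    mul_le_mul_of_nonneg_left (le_max_left _ _) h1t
  have hM2 : t * dist y' y ≤ t * max (dist x' x) (dist y' y) :=
    mul_le_mul_of_nonneg_left (le_max_right _ _) ht.1
  calc dist ((1 - t) • x' + t • y') ((1 - t) • x + t • y)
      ≤ dist ((1 - t) • x') ((1 - t) • x) + dist (t • y') (t • y) := dist_add_add_le _ _ _ _
    _ = (1 - t) * dist x' x + t * dist y' y := by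
        rw [dist_smul₀, dist_smul₀, Real.norm_of_nonneg h1t, Real.norm_of_nonneg ht.1]
    _ ≤ max (dist x' x) (dist y' y) := by linarith
    _ < ε := max_lt hx' hy'

end Aux

/-- Lemma (triangle lemma): a nonempty closed regular nonconvex set with
path-connected interior contains points `x, y, z` in its interior with
`[x,y], [y,z] ⊆ int K` but `[x,z] ⊄ K`. -/
theorem stmt0 (d : ℕ) (K : Set (EuclideanSpace ℝ (Fin d)))
    (hne : K.Nonempty) (hK : IsClosed K) (hreg : closure (interior K) = K)
    (hnc : ¬ Convex ℝ K) (hpc : IsPathConnected (interior K)) :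
    ∃ x ∈ interior K, ∃ y ∈ interior K, ∃ z ∈ interior K,
      segment ℝ x y ⊆ interior K ∧ segment ℝ y z ⊆ interior K ∧
      ¬ segment ℝ x z ⊆ K := by
  by_contra hcon
  push_neg at hcon
  have hint : IsOpen (interior K) := isOpen_interior
  -- Bootstrap: the conclusion of hcon can be upgraded from `⊆ K` to `⊆ interior K`.
  have H' : ∀ x ∈ interior K, ∀ y ∈ interior K, ∀ z ∈ interior K,
      segment ℝ x y ⊆ interior K → segment ℝ y z ⊆ interior K →
      segment ℝ x z ⊆ interior K := by
    intro x hx y hy z hz hxy hyz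
    obtain ⟨ε₁, hε₁, h1⟩ := aux_seg_perturb hint hxy
    obtain ⟨ε₂, hε₂, h2⟩ := aux_seg_perturb hint hyz
    have hε : 0 < min ε₁ ε₂ := lt_min hε₁ hε₂
    intro w hw
    rw [mem_interior]
    refine ⟨ball w (min ε₁ ε₂), fun p hp => ?_, isOpen_ball, mem_ball_self hε⟩
    set v := p - w with hv
    have hvn : ‖v‖ < min ε₁ ε₂ := by
      rw [hv, ← dist_eq_norm]; exact mem_ball.mp hp
    have hd1 : dist (v + x) x < ε₁ := by
      simpa [dist_eq_norm] using lt_of_lt_of_le hvn (min_le_left _ _)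
    have hd2 : dist (v + z) z < ε₂ := by
      simpa [dist_eq_norm] using lt_of_lt_of_le hvn (min_le_right _ _)
    have hseg1 : segment ℝ (v + x) y ⊆ interior K :=
      h1 (v + x) y hd1 (by simpa using hε₁)
    have hseg2 : segment ℝ y (v + z) ⊆ interior K :=
      h2 y (v + z) (by simpa using hε₂) hd2
    have hx' : v + x ∈ interior K := hseg1 (left_mem_segment ℝ _ _)
    have hz' : v + z ∈ interior K := hseg2 (right_mem_segment ℝ _ _)
    have hsub : segment ℝ (v + x) (v + z) ⊆ K := hcon (v + x) hx' y hy (v + z) hz' hseg1 hseg2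
    have hpw : p = v + w := by rw [hv]; abel
    rw [hpw]
    exact hsub ((mem_segment_translate ℝ v).mpr hw)
  -- The interior of K is convex, via a clopen argument on the connected interior.
  have hconv : Convex ℝ (interior K) := by
    rw [convex_iff_segment_subset]
    intro x hx z hz
    set A : Set (EuclideanSpace ℝ (Fin d)) :=
      {y | y ∈ interior K ∧ segment ℝ x y ⊆ interior K} with hAdef
    set B : Set (EuclideanSpace ℝ (Fin d)) :=
      {y | y ∈ interior K ∧ ¬ segment ℝ x y ⊆ interior K} with hBdef
    have hA : IsOpen A := by
      rw [Metric.isOpen_iff]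
      intro y hy
      obtain ⟨ε, hε, h⟩ := aux_seg_perturb hint hy.2
      refine ⟨ε, hε, fun y' hy' => ?_⟩
      have hseg : segment ℝ x y' ⊆ interior K := h x y' (by simpa using hε) (mem_ball.mp hy')
      exact ⟨hseg (right_mem_segment ℝ _ _), hseg⟩
    have hB : IsOpen B := by
      rw [Metric.isOpen_iff]
      intro y hy
      obtain ⟨ε, hε, hball⟩ := Metric.isOpen_iff.mp hint y hy.1
      refine ⟨ε, hε, fun y' hy' => ⟨hball hy', fun hseg => hy.2 ?_⟩⟩
      have hsy : segment ℝ y' y ⊆ interior K := fun q hq =>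
        hball ((convex_ball y ε).segment_subset hy' (mem_ball_self hε) hq)
      exact H' x hx y' (hball hy') y hy.1 hseg hsy
    have hdisj : Disjoint A B := by
      rw [Set.disjoint_left]
      intro y hyA hyB
      exact hyB.2 hyA.2
    have hsub : interior K ⊆ A ∪ B := by
      intro y hy
      by_cases h : segment ℝ x y ⊆ interior K
      · exact Or.inl ⟨hy, h⟩
      · exact Or.inr ⟨hy, h⟩
    have hxA : x ∈ interior K ∩ A := by
      refine ⟨hx, hx, ?_⟩
      rw [segment_same]
      exact singleton_subset_iff.mpr hx
    have hall : interior K ⊆ A :=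
      (hpc.isConnected.isPreconnected).subset_left_of_subset_union hA hB hdisj hsub ⟨x, hxA⟩
    exact (hall hz).2
  exact hnc (hreg ▸ hconv.closure)
end

section
/- Let K ⊆ ℝ^d be a nonconvex closed set with cl(int K) = K and path-connected interior. Then there exist finitely many points x₀, x₁, …, x_m in int K such that each segment [x_{i-1}, x_i] (for i = 1,…,m) is contained in int K, while the segment [x₀, x_m] is not contained in K. -/
open Metric

variable {E : Type*} [NormedAddCommGroup E] [NormedSpace ℝ E]

lemma poly_conn {U : Set E} (hU : IsOpen U) (hpc : IsPathConnected U)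
    {a b : E} (ha : a ∈ U) (hb : b ∈ U) :
    Relation.ReflTransGen (fun x y => segment ℝ x y ⊆ U) a b := by
  set r : E → E → Prop := fun x y => segment ℝ x y ⊆ U with hr
  set A : Set E := {y | y ∈ U ∧ Relation.ReflTransGen r a y} with hA
  set B : Set E := {y | y ∈ U ∧ ¬ Relation.ReflTransGen r a y} with hB
  have hball : ∀ y ∈ U, ∃ ε > 0, ∀ z ∈ ball y ε, r y z ∧ r z y := by
    intro y hy
    obtain ⟨ε, hε, hsub⟩ := Metric.isOpen_iff.1 hU y hy
    refine ⟨ε, hε, fun z hz => ?_⟩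
    have h1 : segment ℝ y z ⊆ ball y ε :=
      (convex_ball y ε).segment_subset (mem_ball_self hε) hz
    have h2 : segment ℝ z y ⊆ ball y ε := by rw [segment_symm]; exact h1
    exact ⟨h1.trans hsub, h2.trans hsub⟩
  have hAopen : IsOpen A := by
    rw [Metric.isOpen_iff]
    rintro y ⟨hyU, hyr⟩
    obtain ⟨ε, hε, hseg⟩ := hball y hyU
    obtain ⟨ε', hε', hsub⟩ := Metric.isOpen_iff.1 hU y hyU
    refine ⟨min ε ε', lt_min hε hε', fun z hz => ?_⟩
    have hz1 : z ∈ ball y ε := mem_ball.2 (lt_of_lt_of_le (mem_ball.1 hz) (min_le_left _ _))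
    have hz2 : z ∈ U := hsub (mem_ball.2 (lt_of_lt_of_le (mem_ball.1 hz) (min_le_right _ _)))
    exact ⟨hz2, hyr.tail (hseg z hz1).1⟩
  have hBopen : IsOpen B := by
    rw [Metric.isOpen_iff]
    rintro y ⟨hyU, hyr⟩
    obtain ⟨ε, hε, hseg⟩ := hball y hyU
    obtain ⟨ε', hε', hsub⟩ := Metric.isOpen_iff.1 hU y hyU
    refine ⟨min ε ε', lt_min hε hε', fun z hz => ?_⟩
    have hz1 : z ∈ ball y ε := mem_ball.2 (lt_of_lt_of_le (mem_ball.1 hz) (min_le_left _ _))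
    have hz2 : z ∈ U := hsub (mem_ball.2 (lt_of_lt_of_le (mem_ball.1 hz) (min_le_right _ _)))
    exact ⟨hz2, fun hcon => hyr (hcon.tail (hseg z hz1).2)⟩
  by_contra hcon
  have hconn : IsPreconnected U := hpc.isConnected.isPreconnected
  obtain ⟨z, hzU, hzA, hzB⟩ :=
    hconn A B hAopen hBopen (fun y hy => by
      by_cases h : Relation.ReflTransGen r a y
      · exact Or.inl ⟨hy, h⟩
      · exact Or.inr ⟨hy, h⟩)
      ⟨a, ha, ha, Relation.ReflTransGen.refl⟩ ⟨b, hb, hb, hcon⟩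
  exact hzB.2 hzA.2

lemma chain_of_rtg {U : Set E} {a b : E}
    (h : Relation.ReflTransGen (fun x y => segment ℝ x y ⊆ U) a b) (ha : a ∈ U) :
    ∃ (m : ℕ) (x : Fin (m + 1) → E), x 0 = a ∧ x (Fin.last m) = b ∧
      (∀ i, x i ∈ U) ∧ ∀ i : Fin m, segment ℝ (x i.castSucc) (x i.succ) ⊆ U := by
  induction h with
  | refl => exact ⟨0, fun _ => a, rfl, rfl, fun _ => ha, fun i => i.elim0⟩
  | @tail c b' hac hcb ih =>
    obtain ⟨m, x, hx0, hxl, hxm, hxs⟩ := ih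
    refine ⟨m + 1, Fin.snoc x b', ?_, ?_, ?_, ?_⟩
    · rw [show (0 : Fin (m+2)) = Fin.castSucc 0 by rfl, Fin.snoc_castSucc]; exact hx0
    · simp
    · intro i
      induction i using Fin.lastCases with
      | last => rw [Fin.snoc_last]; exact hcb (right_mem_segment ℝ c b')
      | cast j => rw [Fin.snoc_castSucc]; exact hxm j
    · intro i
      induction i using Fin.lastCases with
      | last =>
        rw [Fin.succ_last, Fin.snoc_last, Fin.snoc_castSucc, hxl]
        exact hcb
      | cast j =>
        rw [Fin.succ_castSucc]
        simp only [Fin.snoc_castSucc]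
        exact hxs j

/-- A nonempty closed regular nonconvex set with path-connected interior admits a
finite chain `x₀, …, x_m` in its interior whose consecutive segments lie in the
interior while `[x₀, x_m] ⊄ K`. -/
theorem stmt1 (d : ℕ) (K : Set (EuclideanSpace ℝ (Fin d)))
    (hne : K.Nonempty) (hK : IsClosed K) (hreg : closure (interior K) = K)
    (hnc : ¬ Convex ℝ K) (hpc : IsPathConnected (interior K)) :
    ∃ (m : ℕ) (x : Fin (m + 1) → EuclideanSpace ℝ (Fin d)),
      (∀ i, x i ∈ interior K) ∧
      (∀ i : Fin m, segment ℝ (x i.castSucc) (x i.succ) ⊆ interior K) ∧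
      ¬ segment ℝ (x 0) (x (Fin.last m)) ⊆ K := by
  -- extract witnesses of nonconvexity
  rw [convex_iff_segment_subset] at hnc
  push_neg at hnc
  obtain ⟨a, haK, b, hbK, hseg⟩ := hnc
  rw [Set.not_subset] at hseg
  obtain ⟨z, hz, hzK⟩ := hseg
  -- a ball around z misses K
  obtain ⟨ε, hε, hball⟩ := Metric.isOpen_iff.1 hK.isOpen_compl z hzK
  -- perturb a, b into the interior
  have key : ∀ w ∈ K, ∃ w' ∈ interior K, dist w' w < ε := by
    intro w hw
    rw [← hreg] at hw
    obtain ⟨w', hw', hd⟩ := Metric.mem_closure_iff.1 hw ε hε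
    exact ⟨w', hw', by rwa [dist_comm]⟩
  obtain ⟨a', ha', hda⟩ := key a haK
  obtain ⟨b', hb', hdb⟩ := key b hbK
  -- the perturbed segment still leaves K
  obtain ⟨u, v, hu, hv, huv, hzeq⟩ := hz
  set z' : EuclideanSpace ℝ (Fin d) := u • a' + v • b' with hz'
  have hz'seg : z' ∈ segment ℝ a' b' := ⟨u, v, hu, hv, huv, rfl⟩
  have hz'K : z' ∉ K := by
    apply hball
    rw [mem_ball, dist_eq_norm]
    have : z' - z = u • (a' - a) + v • (b' - b) := by
      rw [hz', ← hzeq]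
      simp [smul_sub]
      abel
    rw [this]
    calc ‖u • (a' - a) + v • (b' - b)‖ ≤ ‖u • (a' - a)‖ + ‖v • (b' - b)‖ := norm_add_le _ _
      _ = u * ‖a' - a‖ + v * ‖b' - b‖ := by
          rw [norm_smul, norm_smul, Real.norm_of_nonneg hu, Real.norm_of_nonneg hv]
      _ ≤ u * max ‖a' - a‖ ‖b' - b‖ + v * max ‖a' - a‖ ‖b' - b‖ := by
          gcongr
          · exact le_max_left _ _
          · exact le_max_right _ _
      _ = max ‖a' - a‖ ‖b' - b‖ := by rw [← add_mul, huv, one_mul]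
      _ < ε := by
          rw [max_lt_iff]
          constructor
          · rw [← dist_eq_norm]; exact hda
          · rw [← dist_eq_norm]; exact hdb
  -- polygonal chain
  have hrtg := poly_conn isOpen_interior hpc ha' hb'
  obtain ⟨m, x, hx0, hxl, hxm, hxs⟩ := chain_of_rtg hrtg ha'
  refine ⟨m, x, hxm, hxs, fun hsub => ?_⟩
  rw [hx0, hxl] at hsub
  exact hz'K (hsub hz'seg)
end

section
/- If x₀, x₁, …, x_m (m ≥ 2) is a sequence of points in an open set U ⊆ ℝ^d such that each segment [x_{i-1}, x_i] ⊆ U and [x₀, x_m] ⊄ K for a closed set K ⊇ U, and moreover m is minimal among all such sequences, then m = 2; that is, there exist x, y, z ∈ U with [x,y] ⊆ U, [y,z] ⊆ U, and [x,z] ⊄ K. -/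
lemma seg_compact {E : Type*} [NormedAddCommGroup E] [NormedSpace ℝ E] (p q : E) :
    IsCompact (segment ℝ p q) := by
  rw [segment_eq_image]
  exact (isCompact_Icc).image (by continuity)

lemma seg_perturb {E : Type*} [NormedAddCommGroup E] [NormedSpace ℝ E] {U : Set E}
    (hUo : IsOpen U) {p q : E} (h : segment ℝ p q ⊆ U) :
    ∃ ε > 0, ∀ v w : E, ‖v‖ < ε → ‖w‖ < ε → segment ℝ (p + v) (q + w) ⊆ U := by
  obtain ⟨ε, hε, hsub⟩ := (seg_compact p q).exists_thickening_subset_open hUo h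
  refine ⟨ε, hε, fun v w hv hw z hz => hsub ?_⟩
  obtain ⟨a, b, ha, hb, hab, rfl⟩ := hz
  rw [Metric.mem_thickening_iff]
  refine ⟨a • p + b • q, ⟨a, b, ha, hb, hab, rfl⟩, ?_⟩
  have hd : a • (p + v) + b • (q + w) - (a • p + b • q) = a • v + b • w := by
    simp [smul_add]; abel
  rw [dist_eq_norm, hd]
  calc ‖a • v + b • w‖ ≤ ‖a • v‖ + ‖b • w‖ := norm_add_le _ _
    _ = a * ‖v‖ + b * ‖w‖ := by rw [norm_smul, norm_smul, Real.norm_of_nonneg ha,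
        Real.norm_of_nonneg hb]
    _ ≤ a * max ‖v‖ ‖w‖ + b * max ‖v‖ ‖w‖ := by
        gcongr
        · exact le_max_left _ _
        · exact le_max_right _ _
    _ = max ‖v‖ ‖w‖ := by rw [← add_mul, hab, one_mul]
    _ < ε := max_lt hv hw

/-- If a chain `x₀, …, x_m` (with `m ≥ 2`) in the open set `U = int K` has all
consecutive segments inside `U` while `[x₀, x_m] ⊄ K`, and `m` is minimal among
all such chains, then `m = 2`; i.e. there are `x, y, z ∈ U` with
`[x,y] ⊆ U`, `[y,z] ⊆ U`, `[x,z] ⊄ K`. -/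
theorem stmt2 (d : ℕ) (K U : Set (EuclideanSpace ℝ (Fin d)))
    (hK : IsClosed K) (hU : U = interior K) (hpc : IsPathConnected U)
    (m : ℕ) (hm : 2 ≤ m) (x : Fin (m + 1) → EuclideanSpace ℝ (Fin d))
    (hmem : ∀ i, x i ∈ U)
    (hseg : ∀ i : Fin m, segment ℝ (x i.castSucc) (x i.succ) ⊆ U)
    (hout : ¬ segment ℝ (x 0) (x (Fin.last m)) ⊆ K)
    (hmin : ∀ (m' : ℕ) (y : Fin (m' + 1) → EuclideanSpace ℝ (Fin d)),
      (∀ i, y i ∈ U) →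
      (∀ i : Fin m', segment ℝ (y i.castSucc) (y i.succ) ⊆ U) →
      ¬ segment ℝ (y 0) (y (Fin.last m')) ⊆ K → m ≤ m') :
    m = 2 ∧ ∃ a ∈ U, ∃ b ∈ U, ∃ c ∈ U,
      segment ℝ a b ⊆ U ∧ segment ℝ b c ⊆ U ∧ ¬ segment ℝ a c ⊆ K := by
  have hUo : IsOpen U := hU ▸ isOpen_interior
  have hUK : U ⊆ K := hU ▸ interior_subset
  have hm2 : m = 2 := by
    by_contra hne
    have hm3 : 3 ≤ m := by omega
    obtain ⟨k, rfl⟩ : ∃ k, m = k + 1 := ⟨m - 1, by omega⟩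
    have hk2 : 2 ≤ k := by omega
    -- abbreviations for the first three points
    set x0 : EuclideanSpace ℝ (Fin d) := x ⟨0, by omega⟩ with hx0
    set x1 : EuclideanSpace ℝ (Fin d) := x ⟨1, by omega⟩ with hx1
    set x2 : EuclideanSpace ℝ (Fin d) := x ⟨2, by omega⟩ with hx2
    have hs01 : segment ℝ x0 x1 ⊆ U := hseg ⟨0, by omega⟩
    have hs12 : segment ℝ x1 x2 ⊆ U := hseg ⟨1, by omega⟩
    -- step 1: the segment [x₀, x₂] is not contained in U
    have hstep : ¬ segment ℝ x0 x2 ⊆ U := by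
      intro hsub
      set y : Fin (k + 1) → EuclideanSpace ℝ (Fin d) :=
        fun i => if i = 0 then x0 else x ⟨i.val + 1, by omega⟩ with hy
      have hle := hmin k y
        (fun i => by
          rw [hy]
          dsimp only
          split <;> exact hmem _)
        (fun i => by
          by_cases h0 : i.val = 0
          · have e1 : y i.castSucc = x0 := by
              have hc : i.castSucc = 0 := by
                ext; simpa using h0
              simp [hy, hc]
            have e2 : y i.succ = x2 := by
              have hns : i.succ ≠ 0 := Fin.succ_ne_zero i
              simp only [hy, hns, if_false]
              congr 1
              ext
              simp [h0]
            rw [e1, e2]; exact hsub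
          · have hc : i.castSucc ≠ 0 := by
              simp [Fin.ext_iff, h0]
            have hns : i.succ ≠ 0 := Fin.succ_ne_zero i
            have e1 : y i.castSucc = x ⟨i.val + 1, by omega⟩ := by
              simp only [hy, hc, if_false]
              rfl
            have e2 : y i.succ = x ⟨i.val + 2, by omega⟩ := by
              simp only [hy, hns, if_false]
              rfl
            rw [e1, e2]
            exact hseg ⟨i.val + 1, by omega⟩)
        (by
          have e1 : y 0 = x0 := by simp [hy]
          have e2 : y (Fin.last k) = x (Fin.last (k + 1)) := by
            have : (Fin.last k : Fin (k + 1)) ≠ 0 := by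
              simp [Fin.ext_iff]; omega
            simp only [hy, this, if_false]
            rfl
          rw [e1, e2]
          have h00 : (⟨0, by omega⟩ : Fin (k + 1 + 1)) = 0 := by
            ext
            simp
          rw [hx0, h00]
          exact hout)
      omega
    by_cases hKc : segment ℝ x0 x2 ⊆ K
    · -- find a boundary point and push the segment out of K
      obtain ⟨w, hwseg, hwU⟩ := Set.not_subset.mp hstep
      have hwK : w ∉ interior K := hU ▸ hwU
      have hwcl : w ∈ closure Kᶜ := by
        rw [closure_compl]; exact hwK
      obtain ⟨ε1, hε1, hp1⟩ := seg_perturb hUo hs01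
      obtain ⟨ε2, hε2, hp2⟩ := seg_perturb hUo hs12
      obtain ⟨b, hbK, hbd⟩ := Metric.mem_closure_iff.mp hwcl (min ε1 ε2)
        (lt_min hε1 hε2)
      set v : EuclideanSpace ℝ (Fin d) := b - w with hv
      have hvn : ‖v‖ < min ε1 ε2 := by
        rw [hv, ← dist_eq_norm']
        exact hbd
      have hv1 : ‖v‖ < ε1 := hvn.trans_le (min_le_left _ _)
      have hv2 : ‖v‖ < ε2 := hvn.trans_le (min_le_right _ _)
      have h0n : ‖(0 : EuclideanSpace ℝ (Fin d))‖ < ε1 := by simpa using hε1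
      have h0n2 : ‖(0 : EuclideanSpace ℝ (Fin d))‖ < ε2 := by simpa using hε2
      set z : Fin 3 → EuclideanSpace ℝ (Fin d) :=
        fun i => if i.val = 0 then x0 + v else if i.val = 1 then x1 else x2 + v with hz
      have hz0 : z 0 = x0 + v := rfl
      have hz1 : z 1 = x1 := rfl
      have hz2 : z 2 = x2 + v := rfl
      have hzl : z (Fin.last 2) = x2 + v := rfl
      have hseg1 : segment ℝ (x0 + v) x1 ⊆ U := by
        have := hp1 v 0 hv1 h0n
        simpa using this
      have hseg2 : segment ℝ x1 (x2 + v) ⊆ U := by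
        have := hp2 0 v h0n2 hv2
        simpa using this
      have hle := hmin 2 z
        (fun i => by
          fin_cases i
          · exact hseg1 (left_mem_segment ℝ _ _)
          · exact hmem _
          · exact hseg2 (right_mem_segment ℝ _ _))
        (fun i => by
          fin_cases i
          · exact hseg1
          · exact hseg2)
        (by
          intro hsub
          apply hbK
          apply hsub
          have : b = w + v := by rw [hv]; abel
          rw [this]
          obtain ⟨a, c, ha, hc, hac, rfl⟩ := hwseg
          refine ⟨a, c, ha, hc, hac, ?_⟩
          rw [hz0, hzl]
          have hco : a • (x0 + v) + c • (x2 + v) = a • x0 + c • x2 + (a + c) • v := by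
            module
          rw [hco, hac, one_smul])
      omega
    · -- the 2-chain x₀, x₁, x₂ already fails
      set z : Fin 3 → EuclideanSpace ℝ (Fin d) :=
        fun i => if i.val = 0 then x0 else if i.val = 1 then x1 else x2 with hz
      have hle := hmin 2 z
        (fun i => by fin_cases i <;> exact hmem _)
        (fun i => by fin_cases i
                     · exact hs01
                     · exact hs12)
        (by exact hKc)
      omega
  subst hm2
  refine ⟨rfl, x 0, hmem 0, x 1, hmem 1, x 2, hmem 2, ?_, ?_, ?_⟩
  · exact hseg 0
  · exact hseg 1
  · exact hout
end

section
/- A set K ⊆ ℝ^d is convex if and only if K is connected and locally convex at every point (for every x ∈ K there is an open neighborhood U of x with K ∩ U convex), provided K is closed. -/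
set_option linter.unusedSectionVars false

open Finset Metric Set

namespace Beardon

variable {E : Type*} [NormedAddCommGroup E] [InnerProductSpace ℝ E]

/-- Length of the polygonal chain `v 0, v 1, ..., v k`. -/
noncomputable def clen (k : ℕ) (v : ℕ → E) : ℝ :=
  ∑ i ∈ Finset.range k, dist (v i) (v (i + 1))

lemma clen_nonneg (k : ℕ) (v : ℕ → E) : 0 ≤ clen k v :=
  Finset.sum_nonneg fun _ _ => dist_nonneg

lemma dist_le_clen {k : ℕ} (v : ℕ → E) {i : ℕ} (hi : i ≤ k) :
    dist (v 0) (v i) ≤ clen k v := by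
  refine (dist_le_range_sum_dist v i).trans ?_
  exact Finset.sum_le_sum_of_subset_of_nonneg
    (Finset.range_subset_range.2 hi) (fun _ _ _ => dist_nonneg)

lemma edge_le_clen {k : ℕ} (v : ℕ → E) {i : ℕ} (hi : i < k) :
    dist (v i) (v (i + 1)) ≤ clen k v :=
  Finset.single_le_sum (f := fun j => dist (v j) (v (j + 1)))
    (fun _ _ => dist_nonneg) (Finset.mem_range.2 hi)

/-- Uniform local convexity radius (Lebesgue number) on a bounded piece of `K`. -/
lemma exists_eps {K : Set E} [FiniteDimensional ℝ E] (hK : IsClosed K)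
    (hloc : ∀ x ∈ K, ∃ U : Set E, IsOpen U ∧ x ∈ U ∧ Convex ℝ (K ∩ U))
    (x₀ : E) (R : ℝ) :
    ∃ ε > 0, ∀ p ∈ K, ∀ q ∈ K, dist x₀ p ≤ R → dist p q ≤ ε →
      segment ℝ p q ⊆ K := by
  classical
  set C : Set E := K ∩ closedBall x₀ R with hC
  have hCcomp : IsCompact C := by
    apply isCompact_of_isClosed_isBounded (hK.inter isClosed_closedBall)
    exact isBounded_closedBall.subset Set.inter_subset_right
  choose U hUopen hUmem hUconv using hloc
  have hcover : C ⊆ ⋃ z : C, U z.1 z.2.1 := fun z hz =>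
    Set.mem_iUnion.2 ⟨⟨z, hz⟩, hUmem _ _⟩
  obtain ⟨δ, hδ, hball⟩ := lebesgue_number_lemma_of_metric hCcomp
    (fun z : C => hUopen z.1 z.2.1) hcover
  refine ⟨δ / 2, by positivity, fun p hp q hq hR hpq => ?_⟩
  have hpC : p ∈ C := ⟨hp, by rwa [mem_closedBall, dist_comm]⟩
  obtain ⟨z, hz⟩ := hball p hpC
  have hconv : Convex ℝ (K ∩ ball p δ) := by
    have heq : K ∩ ball p δ = (K ∩ U z.1 z.2.1) ∩ ball p δ := by
      ext w
      constructor
      · rintro ⟨hwK, hwb⟩; exact ⟨⟨hwK, hz hwb⟩, hwb⟩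
      · rintro ⟨⟨hwK, _⟩, hwb⟩; exact ⟨hwK, hwb⟩
    rw [heq]
    exact (hUconv _ _).inter (convex_ball p δ)
  have hsub := hconv.segment_subset (x := p) (y := q)
    ⟨hp, mem_ball_self hδ⟩ ⟨hq, by rw [mem_ball, dist_comm]; linarith⟩
  exact hsub.trans Set.inter_subset_left

/-- Any two points of a preconnected, locally convex set are joined by a
polygonal chain whose segments lie in the set. -/
lemma exists_chain {K : Set E} (hconn : IsPreconnected K)
    (hloc : ∀ x ∈ K, ∃ U : Set E, IsOpen U ∧ x ∈ U ∧ Convex ℝ (K ∩ U))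
    {x y : E} (hx : x ∈ K) (hy : y ∈ K) :
    ∃ k, ∃ v : ℕ → E, v 0 = x ∧ v k = y ∧ (∀ i ≤ k, v i ∈ K) ∧
      ∀ i < k, segment ℝ (v i) (v (i + 1)) ⊆ K := by
  classical
  choose U hUopen hUmem hUconv using hloc
  set u : E → Set E := fun z => if h : z ∈ K then U z h else ∅ with hu
  have huo : ∀ z, IsOpen (u z) := by
    intro z; by_cases h : z ∈ K
    · simpa [hu, h] using hUopen z h
    · simp [hu, h]
  have humem : ∀ z, z ∈ K → z ∈ u z := by
    intro z h; simpa [hu, h] using hUmem z h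
  have huconv : ∀ z, z ∈ K → Convex ℝ (K ∩ u z) := by
    intro z h; simpa [hu, h] using hUconv z h
  set S : Set E := {z | z ∈ K ∧ ∃ k, ∃ v : ℕ → E, v 0 = x ∧ v k = z ∧
    (∀ i ≤ k, v i ∈ K) ∧ ∀ i < k, segment ℝ (v i) (v (i + 1)) ⊆ K} with hS
  have hxS : x ∈ S := ⟨hx, 0, fun _ => x, rfl, rfl, fun i _ => hx,
    fun i h => absurd h (Nat.not_lt_zero i)⟩
  have hext : ∀ z ∈ S, ∀ w, w ∈ K → segment ℝ z w ⊆ K → w ∈ S := by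
    rintro z ⟨hzK, k, v, hv0, hvk, hvmem, hvseg⟩ w hw hsg
    refine ⟨hw, k + 1, fun i => if i ≤ k then v i else w, by simp [hv0],
      by simp, ?_, ?_⟩
    · intro i _
      by_cases h : i ≤ k
      · simpa [h] using hvmem i h
      · simpa [h] using hw
    · intro i hi
      rcases Nat.lt_or_ge i k with h | h
      · simpa [h.le, Nat.succ_le_of_lt h] using hvseg i h
      · have hik : i = k := by omega
        subst hik
        have hni : ¬ (i + 1 ≤ i) := by omega
        simpa [le_refl, hni, hvk] using hsg
  have hstep : ∀ z, z ∈ K → ∀ w, w ∈ K → w ∈ u z →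
      (z ∈ S → w ∈ S) ∧ (w ∈ S → z ∈ S) := by
    intro z hz w hw hwu
    have h1 : segment ℝ z w ⊆ K :=
      ((huconv z hz).segment_subset ⟨hz, humem z hz⟩ ⟨hw, hwu⟩).trans
        Set.inter_subset_left
    have h2 : segment ℝ w z ⊆ K := by rwa [segment_symm]
    exact ⟨fun hzS => hext z hzS w hw h1, fun hwS => hext w hwS z hz h2⟩
  by_contra hny
  have hyS : y ∉ S := fun h => hny h.2
  obtain ⟨zz, hzzK, hzz1, hzz2⟩ := hconn (⋃ z ∈ S, u z) (⋃ z ∈ K \ S, u z)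
    (isOpen_biUnion fun z _ => huo z) (isOpen_biUnion fun z _ => huo z)
    (fun w hw => by
      by_cases h : w ∈ S
      · exact Or.inl (Set.mem_biUnion h (humem w hw))
      · exact Or.inr (Set.mem_biUnion ⟨hw, h⟩ (humem w hw)))
    ⟨x, hx, Set.mem_biUnion hxS (humem x hx)⟩
    ⟨y, hy, Set.mem_biUnion ⟨hy, hyS⟩ (humem y hy)⟩
  obtain ⟨z1, hz1S, hz1u⟩ := Set.mem_iUnion₂.1 hzz1
  obtain ⟨z2, hz2, hz2u⟩ := Set.mem_iUnion₂.1 hzz2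
  have hzzS : zz ∈ S := (hstep z1 hz1S.1 zz hzzK hz1u).1 hz1S
  exact hz2.2 ((hstep z2 hz2.1 zz hzzK hz2u).2 hzzS)

lemma sum_div_helper (n : ℕ) (g : ℕ → ℝ) :
    ∀ k, ∑ t ∈ Finset.range (k * n), g (t / n) = n * ∑ q ∈ Finset.range k, g q := by
  intro k
  induction k with
  | zero => simp
  | succ k ih =>
    have hle : k * n ≤ (k + 1) * n := Nat.mul_le_mul_right n (Nat.le_succ k)
    rw [← Finset.sum_range_add_sum_Ico (fun t => g (t / n)) hle, ih]
    have hconst : ∀ t ∈ Finset.Ico (k * n) ((k + 1) * n), g (t / n) = g k := by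
      intro t ht
      obtain ⟨h1, h2⟩ := Finset.mem_Ico.1 ht
      rw [Nat.div_eq_of_lt_le h1 h2]
    rw [Finset.sum_congr rfl hconst, Finset.sum_const, Nat.card_Ico]
    have hcard : (k + 1) * n - k * n = n := by
      rw [Nat.succ_mul]; omega
    rw [hcard, nsmul_eq_mul, Finset.sum_range_succ]
    ring

/-- Subdivide a chain of segments inside `K` so that all gaps are `≤ δ`. -/
lemma subdiv {K : Set E} {k : ℕ} {v : ℕ → E} {δ : ℝ} (hδ : 0 < δ)
    (hmem : ∀ i ≤ k, v i ∈ K) (hseg : ∀ i < k, segment ℝ (v i) (v (i + 1)) ⊆ K) :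
    ∃ m, ∃ w : ℕ → E, w 0 = v 0 ∧ w m = v k ∧ (∀ i ≤ m, w i ∈ K) ∧
      (∀ i < m, dist (w i) (w (i + 1)) ≤ δ) ∧ clen m w = clen k v := by
  set L := clen k v with hL
  have hL0 : 0 ≤ L := clen_nonneg k v
  set n : ℕ := ⌈L / δ⌉₊ + 1 with hn
  have hnpos : 0 < n := Nat.succ_pos _
  have hnR : 0 < (n : ℝ) := by exact_mod_cast hnpos
  have hLn' : L / δ ≤ (n : ℝ) := by
    calc L / δ ≤ (⌈L / δ⌉₊ : ℝ) := Nat.le_ceil _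
      _ ≤ n := by exact_mod_cast Nat.le_succ _
  have hLn : L ≤ (n : ℝ) * δ := (div_le_iff₀ hδ).1 hLn'
  set w : ℕ → E := fun t =>
    v (t / n) + (((t % n : ℕ) : ℝ) / n) • (v (t / n + 1) - v (t / n)) with hw
  have hw0 : w 0 = v 0 := by simp [hw]
  have hwlast : w (k * n) = v k := by
    simp [hw, Nat.mul_div_cancel _ hnpos, Nat.mul_mod_left]
  have hdivlt : ∀ t, t < k * n → t / n < k := fun t ht =>
    (Nat.div_lt_iff_lt_mul hnpos).2 ht
  have hstep : ∀ t, t < k * n →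
      w (t + 1) - w t = ((1 : ℝ) / n) • (v (t / n + 1) - v (t / n)) := by
    intro t _
    have hdm := Nat.div_add_mod t n
    rcases Nat.lt_or_ge (t % n + 1) n with hcase | hcase
    · obtain ⟨hd, hm⟩ := (Nat.div_mod_unique hnpos).2
        (⟨by omega, hcase⟩ : t % n + 1 + n * (t / n) = t + 1 ∧ t % n + 1 < n)
      rw [hw]
      simp only [hd, hm]
      rw [add_sub_add_left_eq_sub, ← sub_smul]
      congr 1
      push_cast
      field_simp
      ring
    · have hcase' : t % n + 1 = n := by
        have := Nat.mod_lt t hnpos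
        omega
      obtain ⟨hd, hm⟩ := (Nat.div_mod_unique hnpos).2
        (⟨by rw [Nat.mul_succ]; omega, hnpos⟩ : 0 + n * (t / n + 1) = t + 1 ∧ 0 < n)
      rw [hw]
      simp only [hd, hm, Nat.cast_zero, zero_div, zero_smul, add_zero]
      have hr : ((t % n : ℕ) : ℝ) / n = 1 - 1 / n := by
        rw [eq_sub_iff_add_eq, ← add_div]
        rw [div_eq_one_iff_eq hnR.ne']
        exact_mod_cast hcase'
      rw [hr, sub_smul, one_smul]
      abel
  have hedge : ∀ t, t < k * n →
      dist (w t) (w (t + 1)) = dist (v (t / n)) (v (t / n + 1)) / n := by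
    intro t ht
    rw [dist_eq_norm', hstep t ht, norm_smul, dist_eq_norm']
    simp only [norm_div, norm_one, Real.norm_natCast]
    rw [one_div, inv_mul_eq_div]
  refine ⟨k * n, w, hw0, hwlast, ?_, ?_, ?_⟩
  · intro i hi
    rcases eq_or_lt_of_le hi with heq | hi'
    · rw [heq, hwlast]; exact hmem k le_rfl
    · have hq := hdivlt i hi'
      have hmem' : w i ∈ segment ℝ (v (i / n)) (v (i / n + 1)) := by
        rw [segment_eq_image']
        refine ⟨((i % n : ℕ) : ℝ) / n, ⟨by positivity, ?_⟩, rfl⟩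
        rw [div_le_one hnR]
        exact_mod_cast (Nat.mod_lt i hnpos).le
      exact hseg _ hq hmem'
  · intro i hi
    rw [hedge i hi]
    have h1 : dist (v (i / n)) (v (i / n + 1)) ≤ L := edge_le_clen v (hdivlt i hi)
    calc dist (v (i / n)) (v (i / n + 1)) / n ≤ L / n := by gcongr
      _ ≤ δ := by rw [div_le_iff₀ hnR]; linarith
  · unfold clen
    rw [Finset.sum_congr rfl (fun t ht => hedge t (Finset.mem_range.1 ht)),
      sum_div_helper n (fun q => dist (v q) (v (q + 1)) / n) k,
      ← Finset.sum_div, mul_div_cancel₀ _ hnR.ne']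
    exact hL.symm

/-- Pad a chain with a repeated last vertex up to length `N`. -/
lemma pad {K : Set E} {k N : ℕ} (hkN : k ≤ N) {δ : ℝ} (hδ : 0 ≤ δ) {v : ℕ → E}
    (hmem : ∀ i ≤ k, v i ∈ K) (hgap : ∀ i < k, dist (v i) (v (i + 1)) ≤ δ) :
    (∀ i ≤ N, v (min i k) ∈ K) ∧
    (∀ i < N, dist (v (min i k)) (v (min (i + 1) k)) ≤ δ) ∧
    clen N (fun i => v (min i k)) = clen k v := by
  refine ⟨fun i _ => hmem _ (min_le_right i k), fun i _ => ?_, ?_⟩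
  · rcases lt_or_ge i k with h | h
    · simp only [min_eq_left h.le, min_eq_left (Nat.succ_le_of_lt h)]
      exact hgap i h
    · simp only [min_eq_right h, min_eq_right (h.trans (Nat.le_succ i))]
      simpa using hδ
  · unfold clen
    rw [← Finset.sum_subset (Finset.range_subset_range.2 hkN) (fun i _ hi => ?_)]
    · refine Finset.sum_congr rfl fun i hi => ?_
      have h := Finset.mem_range.1 hi
      simp only [min_eq_left h.le, min_eq_left (Nat.succ_le_of_lt h)]
    · have h : k ≤ i := by
        rcases Nat.lt_or_ge i k with h' | h'
        · exact absurd (Finset.mem_range.2 h') hi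
        · exact h'
      simp only [min_eq_right h, min_eq_right (h.trans (Nat.le_succ i))]
      simp

/-- Merge a chain until no two vertices at distance two along the chain are
within `δ` of each other. -/
lemma merge {K : Set E} {δ : ℝ} (hδ : 0 ≤ δ) :
    ∀ k, ∀ v : ℕ → E, (∀ i ≤ k, v i ∈ K) → (∀ i < k, dist (v i) (v (i + 1)) ≤ δ) →
    ∃ k', ∃ v' : ℕ → E, v' 0 = v 0 ∧ v' k' = v k ∧ (∀ i ≤ k', v' i ∈ K) ∧
      (∀ i < k', dist (v' i) (v' (i + 1)) ≤ δ) ∧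
      clen k' v' ≤ clen k v ∧
      ∀ i, i + 2 ≤ k' → δ < dist (v' i) (v' (i + 2)) := by
  intro k
  induction k using Nat.strong_induction_on with
  | _ k ih =>
    intro v hmem hgap
    by_cases hex : ∃ i, i + 2 ≤ k ∧ dist (v i) (v (i + 2)) ≤ δ
    · obtain ⟨i, hik, hid⟩ := hex
      obtain ⟨k0, rfl⟩ : ∃ k0, k = k0 + 1 := ⟨k - 1, by omega⟩
      set v2 : ℕ → E := fun t => if t ≤ i then v t else v (t + 1) with hv2
      have hmem2 : ∀ t ≤ k0, v2 t ∈ K := by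
        intro t _
        by_cases h : t ≤ i
        · simpa [hv2, h] using hmem t (by omega)
        · simpa [hv2, h] using hmem (t + 1) (by omega)
      have hgap2 : ∀ t < k0, dist (v2 t) (v2 (t + 1)) ≤ δ := by
        intro t ht
        by_cases h1 : t < i
        · simpa [hv2, h1.le, Nat.succ_le_of_lt h1] using hgap t (by omega)
        · by_cases h2 : t = i
          · subst h2
            have hni : ¬ (t + 1 ≤ t) := by omega
            simpa [hv2, le_refl, hni] using hid
          · have h3 : ¬ t ≤ i := by omega
            have h4 : ¬ t + 1 ≤ i := by omega
            simpa [hv2, h3, h4] using hgap (t + 1) (by omega)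
      have hend : v2 k0 = v (k0 + 1) := by
        have h : ¬ k0 ≤ i := by omega
        simp [hv2, h]
      have hlen2 : clen k0 v2 ≤ clen (k0 + 1) v := by
        have hik0 : i < k0 := by omega
        unfold clen
        rw [← Finset.sum_range_add_sum_Ico (fun t => dist (v2 t) (v2 (t + 1))) hik0.le,
            ← Finset.sum_range_add_sum_Ico (fun t => dist (v t) (v (t + 1)))
              (show i ≤ k0 + 1 by omega)]
        have e1 : ∑ t ∈ Finset.range i, dist (v2 t) (v2 (t + 1)) =
            ∑ t ∈ Finset.range i, dist (v t) (v (t + 1)) :=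
          Finset.sum_congr rfl fun t ht => by
            have h := Finset.mem_range.1 ht
            simp [hv2, (by omega : t ≤ i), (by omega : t + 1 ≤ i)]
        have e2 : ∑ t ∈ Finset.Ico i k0, dist (v2 t) (v2 (t + 1)) =
            dist (v i) (v (i + 2)) +
            ∑ t ∈ Finset.Ico (i + 1) k0, dist (v (t + 1)) (v (t + 2)) := by
          rw [Finset.sum_eq_sum_Ico_succ_bot hik0]
          congr 1
          · simp [hv2, (by omega : ¬ i + 1 ≤ i), show i + 1 + 1 = i + 2 from rfl]
          · refine Finset.sum_congr rfl fun t ht => ?_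
            obtain ⟨h1, h2⟩ := Finset.mem_Ico.1 ht
            simp only [hv2]
            rw [if_neg (show ¬ t ≤ i by omega), if_neg (show ¬ t + 1 ≤ i by omega)]
        have e3 : ∑ t ∈ Finset.Ico i (k0 + 1), dist (v t) (v (t + 1)) =
            dist (v i) (v (i + 1)) + (dist (v (i + 1)) (v (i + 2)) +
            ∑ t ∈ Finset.Ico (i + 2) (k0 + 1), dist (v t) (v (t + 1))) := by
          rw [Finset.sum_eq_sum_Ico_succ_bot (by omega : i < k0 + 1),
              Finset.sum_eq_sum_Ico_succ_bot (by omega : i + 1 < k0 + 1)]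
        have e4 : ∑ t ∈ Finset.Ico (i + 1) k0, dist (v (t + 1)) (v (t + 2)) =
            ∑ t ∈ Finset.Ico (i + 2) (k0 + 1), dist (v t) (v (t + 1)) := by
          rw [Finset.sum_Ico_eq_sum_range, Finset.sum_Ico_eq_sum_range]
          rw [show k0 + 1 - (i + 2) = k0 - (i + 1) by omega]
          refine Finset.sum_congr rfl fun t _ => ?_
          rw [show i + 1 + t + 1 = i + 2 + t by omega,
              show i + 1 + t + 2 = i + 2 + t + 1 by omega]
        rw [e1, e2, e3, e4]
        have htri := dist_triangle (v i) (v (i + 1)) (v (i + 2))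
        linarith
      obtain ⟨k', v', h0, hk', hm', hg', hl', hno'⟩ := ih k0 (by omega) v2 hmem2 hgap2
      refine ⟨k', v', ?_, by rw [hk', hend], hm', hg', hl'.trans hlen2, hno'⟩
      rw [h0]; simp [hv2]
    · push_neg at hex
      exact ⟨k, v, rfl, rfl, hmem, hgap, le_rfl, fun i hi => hex i hi⟩

/-- Counting: a chain with gaps `≤ δ` and no mergeable vertex is short. -/
lemma count {k : ℕ} {v : ℕ → E} {δ : ℝ} (hδ : 0 ≤ δ)
    (hgap : ∀ i < k, dist (v i) (v (i + 1)) ≤ δ)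
    (hno : ∀ i, i + 2 ≤ k → δ < dist (v i) (v (i + 2))) :
    (k : ℝ) * δ ≤ 2 * clen k v + δ := by
  rcases Nat.eq_zero_or_pos k with rfl | hk
  · have := clen_nonneg 0 v
    simp only [Nat.cast_zero, zero_mul]
    linarith
  obtain ⟨j, rfl⟩ : ∃ j, k = j + 1 := ⟨k - 1, by omega⟩
  have h2 : (j : ℝ) * δ ≤ ∑ i ∈ Finset.range j, dist (v i) (v (i + 2)) := by
    calc (j : ℝ) * δ = ∑ _i ∈ Finset.range j, δ := by
          rw [Finset.sum_const, Finset.card_range, nsmul_eq_mul]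
      _ ≤ _ := Finset.sum_le_sum fun i hi =>
          (hno i (by have := Finset.mem_range.1 hi; omega)).le
  have h3 : ∑ i ∈ Finset.range j, dist (v i) (v (i + 2)) ≤
      ∑ i ∈ Finset.range j, dist (v i) (v (i + 1)) +
      ∑ i ∈ Finset.range j, dist (v (i + 1)) (v (i + 2)) := by
    rw [← Finset.sum_add_distrib]
    exact Finset.sum_le_sum fun i _ => dist_triangle _ _ _
  have h4 : ∑ i ∈ Finset.range j, dist (v i) (v (i + 1)) ≤ clen (j + 1) v :=
    Finset.sum_le_sum_of_subset_of_nonneg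
      (Finset.range_subset_range.2 (Nat.le_succ j)) (fun _ _ _ => dist_nonneg)
  have h5 : ∑ i ∈ Finset.range j, dist (v (i + 1)) (v (i + 2)) ≤ clen (j + 1) v := by
    have he : ∑ i ∈ Finset.range j, dist (v (i + 1)) (v (i + 2)) =
        ∑ i ∈ Finset.Ico 1 (j + 1), dist (v i) (v (i + 1)) := by
      rw [Finset.sum_Ico_eq_sum_range]
      refine Finset.sum_congr (by simp) fun i _ => ?_
      rw [show 1 + i = i + 1 by omega, show i + 1 + 1 = i + 2 by omega]
    rw [he]
    unfold clen
    rw [Finset.range_eq_Ico]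
    exact Finset.sum_le_sum_of_subset_of_nonneg
      (Finset.Ico_subset_Ico (by omega) le_rfl) (fun _ _ _ => dist_nonneg)
  push_cast
  nlinarith [h2, h3, h4, h5]

/-- Splitting a segment at one of its points. -/
lemma mem_segment_split {F : Type*} [AddCommGroup F] [Module ℝ F]
    {x y z p : F} (hy : y ∈ segment ℝ x z) (hp : p ∈ segment ℝ x z) :
    p ∈ segment ℝ x y ∪ segment ℝ y z := by
  rw [segment_eq_image'] at hy hp
  obtain ⟨θ, hθ, rfl⟩ := hy
  obtain ⟨t, ht, rfl⟩ := hp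
  rcases le_total t θ with h | h
  · left
    rw [segment_eq_image']
    rcases eq_or_lt_of_le hθ.1 with hθ0 | hθ0
    · have ht0 : t = 0 := le_antisymm (h.trans hθ0.symm.le) ht.1
      exact ⟨0, ⟨le_refl 0, zero_le_one⟩, by simp [ht0]⟩
    · refine ⟨t / θ, ⟨div_nonneg ht.1 hθ0.le, (div_le_one hθ0).2 h⟩, ?_⟩
      simp only [add_sub_cancel_left, smul_smul]
      rw [div_mul_cancel₀ _ hθ0.ne']
  · right
    rw [segment_eq_image']
    rcases eq_or_lt_of_le hθ.2 with hθ1 | hθ1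
    · have ht1 : t = 1 := le_antisymm ht.2 (hθ1 ▸ h)
      exact ⟨0, ⟨le_refl 0, zero_le_one⟩, by simp [ht1, hθ1]⟩
    · have h1θ : (1 : ℝ) - θ ≠ 0 := sub_ne_zero.2 hθ1.ne'
      have hzy : z - (x + θ • (z - x)) = (1 - θ) • (z - x) := by
        rw [sub_smul, one_smul]; abel
      refine ⟨(t - θ) / (1 - θ),
        ⟨div_nonneg (sub_nonneg.2 h) (by linarith),
         (div_le_one (by linarith)).2 (by linarith [ht.2])⟩, ?_⟩
      show x + θ • (z - x) + ((t - θ) / (1 - θ)) • (z - (x + θ • (z - x))) =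
        x + t • (z - x)
      rw [hzy, smul_smul, div_mul_cancel₀ _ h1θ, sub_smul]
      abel

/-- A chain all of whose corners are flat is straight. -/
lemma flat_chain [StrictConvexSpace ℝ E] :
    ∀ k, ∀ v : ℕ → E, 1 ≤ k → (∀ i < k, v i ≠ v (i + 1)) →
    (∀ i, i + 2 ≤ k →
      dist (v i) (v (i + 1)) + dist (v (i + 1)) (v (i + 2)) = dist (v i) (v (i + 2))) →
    SameRay ℝ (v 1 - v 0) (v k - v 0) ∧ dist (v 0) (v k) = clen k v ∧
      ∀ p ∈ segment ℝ (v 0) (v k), ∃ i < k, p ∈ segment ℝ (v i) (v (i + 1)) := by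
  intro k
  induction k with
  | zero => intro v h; exact absurd h (by omega)
  | succ k ih =>
    intro v _ hne hflat
    rcases Nat.eq_zero_or_pos k with rfl | hkpos
    · refine ⟨SameRay.rfl, ?_, fun p hp => ⟨0, zero_lt_one, hp⟩⟩
      simp [clen]
    · obtain ⟨hSR, hD, hcov⟩ := ih (fun i => v (i + 1)) hkpos
        (fun i hi => hne (i + 1) (by omega)) (fun i hi => hflat (i + 1) (by omega))
      have hc0 := hflat 0 (by omega)
      simp only [zero_add] at hc0
      have hw0 : Wbtw ℝ (v 0) (v 1) (v 2) := dist_add_dist_eq_iff.1 hc0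
      have hSR0 : SameRay ℝ (v 1 - v 0) (v 2 - v 1) := by
        have h := wbtw_iff_sameRay_vsub.1 hw0
        simpa [vsub_eq_sub] using h
      have h21 : v 2 - v 1 ≠ 0 := sub_ne_zero.2 (hne 1 (by omega)).symm
      have hSRm : SameRay ℝ (v 1 - v 0) (v (k + 1) - v 1) :=
        hSR0.trans hSR (fun h => absurd h h21)
      have hnadd := sameRay_iff_norm_add.1 hSRm
      have hnorm : dist (v 0) (v (k + 1)) =
          dist (v 0) (v 1) + dist (v 1) (v (k + 1)) := by
        calc dist (v 0) (v (k + 1)) = ‖v (k + 1) - v 0‖ := dist_eq_norm' _ _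
          _ = ‖(v 1 - v 0) + (v (k + 1) - v 1)‖ := by rw [sub_add_sub_cancel']
          _ = ‖v 1 - v 0‖ + ‖v (k + 1) - v 1‖ := hnadd
          _ = dist (v 0) (v 1) + dist (v 1) (v (k + 1)) := by
              rw [← dist_eq_norm', ← dist_eq_norm']
      refine ⟨?_, ?_, ?_⟩
      · have h := SameRay.add_right (SameRay.rfl : SameRay ℝ (v 1 - v 0) (v 1 - v 0)) hSRm
        rwa [sub_add_sub_cancel'] at h
      · rw [hnorm, hD]
        unfold clen
        rw [Finset.sum_range_succ']
        simp [add_comm]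
      · intro p hp
        have hv1 : v 1 ∈ segment ℝ (v 0) (v (k + 1)) :=
          mem_segment_iff_wbtw.2 (dist_add_dist_eq_iff.1 hnorm.symm)
        rcases mem_segment_split hv1 hp with h | h
        · exact ⟨0, by omega, h⟩
        · obtain ⟨i, hi, hmem⟩ := hcov p h
          exact ⟨i + 1, by omega, hmem⟩

/-- Main hard direction. -/
lemma key {K : Set E} [FiniteDimensional ℝ E] (hK : IsClosed K)
    (hconn : IsPreconnected K)
    (hloc : ∀ x ∈ K, ∃ U : Set E, IsOpen U ∧ x ∈ U ∧ Convex ℝ (K ∩ U)) :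
    Convex ℝ K := by
  classical
  rw [convex_iff_segment_subset]
  intro x hx y hy
  by_cases hxy : x = y
  · subst hxy
    rw [segment_same]
    simpa using hx
  obtain ⟨k₁, v₁, h10, h1k, h1mem, h1seg⟩ := exists_chain hconn hloc hx hy
  set L₀ : ℝ := clen k₁ v₁ + 1 with hL₀
  have hL₀pos : 0 < L₀ := by
    have := clen_nonneg k₁ v₁
    rw [hL₀]; linarith
  obtain ⟨ε, hε, hseg⟩ := exists_eps hK hloc x L₀
  have hε2 : 0 < ε / 2 := by positivity
  obtain ⟨k₂, v₂, h20, h2k, h2mem, h2gap, h2len⟩ := subdiv (K := K) hε2 h1mem h1seg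
  have h2len' : clen k₂ v₂ ≤ L₀ := by rw [h2len, hL₀]; linarith
  set N : ℕ := ⌈4 * L₀ / ε⌉₊ + 8 with hN
  have hcount : ∀ k' (v' : ℕ → E), (∀ i < k', dist (v' i) (v' (i + 1)) ≤ ε / 2) →
      (∀ i, i + 2 ≤ k' → ε / 2 < dist (v' i) (v' (i + 2))) → clen k' v' ≤ L₀ →
      k' + 2 ≤ N := by
    intro k' v' hg hno hl
    have h := count hε2.le hg hno
    have h1 : (k' : ℝ) * (ε / 2) ≤ 2 * L₀ + ε / 2 := by linarith
    have h2 : (k' : ℝ) ≤ 4 * L₀ / ε + 1 := by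
      have h3 := (le_div_iff₀ hε2).2 h1
      have h4 : (2 * L₀ + ε / 2) / (ε / 2) = 4 * L₀ / ε + 1 := by
        field_simp
        ring
      rwa [h4] at h3
    have h3 : (k' : ℝ) ≤ (⌈4 * L₀ / ε⌉₊ : ℝ) + 1 :=
      h2.trans (by linarith [Nat.le_ceil (4 * L₀ / ε)])
    have h4 : k' ≤ ⌈4 * L₀ / ε⌉₊ + 1 := by exact_mod_cast h3
    omega
  obtain ⟨k₃, v₃, h30, h3k, h3mem, h3gap, h3len, h3no⟩ :=
    merge hε2.le k₂ v₂ h2mem h2gap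
  have h3len' : clen k₃ v₃ ≤ L₀ := h3len.trans h2len'
  have hk₃N : k₃ ≤ N := by have := hcount k₃ v₃ h3gap h3no h3len'; omega
  -- the space of `N`-step chains, as tuples
  set c : ℕ → Fin (N + 1) := fun i => ⟨min i N, Nat.lt_succ_of_le (min_le_right i N)⟩
    with hc
  have hcval : ∀ i ≤ N, ((c i : Fin (N + 1)) : ℕ) = i := by
    intro i hi
    rw [hc]
    exact min_eq_left hi
  set W : Set (Fin (N + 1) → E) := {w | w (c 0) = x ∧ w (c N) = y ∧ (∀ i, w i ∈ K) ∧
    (∀ i < N, dist (w (c i)) (w (c (i + 1))) ≤ ε / 2) ∧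
    (∑ i ∈ Finset.range N, dist (w (c i)) (w (c (i + 1)))) ≤ L₀} with hW
  -- membership criterion for tuples coming from ℕ-chains
  have htup : ∀ u : ℕ → E, ∀ i ≤ N, (fun j : Fin (N + 1) => u (j : ℕ)) (c i) = u i := by
    intro u i hi
    show u ((c i : Fin (N + 1)) : ℕ) = u i
    rw [hcval i hi]
  have htupsum : ∀ u : ℕ → E,
      (∑ i ∈ Finset.range N, dist ((fun j : Fin (N + 1) => u (j : ℕ)) (c i))
        ((fun j : Fin (N + 1) => u (j : ℕ)) (c (i + 1)))) = clen N u := by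
    intro u
    refine Finset.sum_congr rfl fun i hi => ?_
    have h := Finset.mem_range.1 hi
    rw [htup u i (by omega), htup u (i + 1) (by omega)]
  have hmemW : ∀ u : ℕ → E, u 0 = x → u N = y → (∀ i ≤ N, u i ∈ K) →
      (∀ i < N, dist (u i) (u (i + 1)) ≤ ε / 2) → clen N u ≤ L₀ →
      (fun j : Fin (N + 1) => u (j : ℕ)) ∈ W := by
    intro u h0 hNy hm hg hl
    refine ⟨by rw [htup u 0 (by omega)]; exact h0,
      by rw [htup u N le_rfl]; exact hNy,
      fun j => hm (j : ℕ) (Nat.lt_succ_iff.1 j.isLt),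
      fun i hi => ?_, by rw [htupsum u]; exact hl⟩
    rw [htup u i (by omega), htup u (i + 1) (by omega)]
    exact hg i hi
  -- W is compact
  have hWclosed : IsClosed W := by
    rw [hW]
    simp only [Set.setOf_and]
    refine IsClosed.inter (isClosed_eq (continuous_apply _) continuous_const)
      (IsClosed.inter (isClosed_eq (continuous_apply _) continuous_const)
      (IsClosed.inter ?_ (IsClosed.inter ?_ ?_)))
    · rw [Set.setOf_forall]
      exact isClosed_iInter fun i => hK.preimage (continuous_apply i)
    · rw [Set.setOf_forall]
      refine isClosed_iInter fun i => ?_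
      rw [Set.setOf_forall]
      exact isClosed_iInter fun _ =>
        isClosed_le ((continuous_apply _).dist (continuous_apply _)) continuous_const
    · exact isClosed_le
        (continuous_finset_sum _ fun i _ => (continuous_apply _).dist (continuous_apply _))
        continuous_const
  have hWsub : W ⊆ closedBall (fun _ => x) L₀ := by
    intro w hw
    obtain ⟨hw0, hwN, hwmem, hwgap, hwlen⟩ := hw
    rw [mem_closedBall, dist_pi_le_iff hL₀pos.le]
    intro j
    have hj : w j = w (c (j : ℕ)) := by
      congr 1
      apply Fin.ext
      rw [hcval (j : ℕ) (by omega)]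
    rw [hj, ← hw0]
    calc dist (w (c (j : ℕ))) (w (c 0))
        = dist ((fun t => w (c t)) 0) ((fun t => w (c t)) (j : ℕ)) := dist_comm _ _
      _ ≤ clen N (fun t => w (c t)) :=
          dist_le_clen (fun t => w (c t)) (Nat.lt_succ_iff.1 j.isLt)
      _ ≤ L₀ := hwlen
  have hWcpt : IsCompact W :=
    isCompact_of_isClosed_isBounded hWclosed (isBounded_closedBall.subset hWsub)
  -- W is nonempty : pad the merged subdivided chain
  obtain ⟨hpm, hpg, hpl⟩ := pad hk₃N hε2.le h3mem h3gap
  have hu₀0 : (fun i => v₃ (min i k₃)) 0 = x := by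
    simp only
    rw [min_eq_left (Nat.zero_le k₃), h30, h20, h10]
  have hu₀N : (fun i => v₃ (min i k₃)) N = y := by
    simp only
    rw [min_eq_right hk₃N, h3k, h2k, h1k]
  have hu₀len : clen N (fun i => v₃ (min i k₃)) ≤ L₀ := by rw [hpl]; exact h3len'
  have hWne : W.Nonempty :=
    ⟨_, hmemW (fun i => v₃ (min i k₃)) hu₀0 hu₀N hpm hpg hu₀len⟩
  -- minimize the length
  have hfc : ContinuousOn
      (fun w : Fin (N + 1) → E => ∑ i ∈ Finset.range N, dist (w (c i)) (w (c (i + 1)))) W :=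
    (continuous_finset_sum _ fun i _ =>
      (continuous_apply (c i)).dist (continuous_apply (c (i + 1)))).continuousOn
  obtain ⟨ws, hwsW, hmin⟩ := hWcpt.exists_isMinOn hWne hfc
  set m : ℝ := ∑ i ∈ Finset.range N, dist (ws (c i)) (ws (c (i + 1))) with hm
  obtain ⟨hs0, hsN, hsmem, hsgap, hslen⟩ := hwsW
  have hminN : ∀ u : ℕ → E, u 0 = x → u N = y → (∀ i ≤ N, u i ∈ K) →
      (∀ i < N, dist (u i) (u (i + 1)) ≤ ε / 2) → clen N u ≤ L₀ → m ≤ clen N u := by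
    intro u h0 hNy hmem' hg hl
    have h := isMinOn_iff.1 hmin _ (hmemW u h0 hNy hmem' hg hl)
    rwa [htupsum u] at h
  -- the ℕ-chain of the minimizer, merged
  have hv4mem : ∀ i ≤ N, (fun t => ws (c t)) i ∈ K := fun i _ => hsmem _
  have hv4gap : ∀ i < N, dist ((fun t => ws (c t)) i) ((fun t => ws (c t)) (i + 1)) ≤ ε / 2 :=
    fun i hi => hsgap i hi
  have hv4len : clen N (fun t => ws (c t)) = m := rfl
  obtain ⟨k₅, q, hq0, hqk, hqmem, hqgap, hqlen, hqno⟩ :=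
    merge hε2.le N (fun t => ws (c t)) hv4mem hv4gap
  have hq0x : q 0 = x := by
    rw [hq0]
    show ws (c 0) = x
    exact hs0
  have hqky : q k₅ = y := by
    rw [hqk]
    show ws (c N) = y
    exact hsN
  have hmleL : m ≤ L₀ := by rw [hm]; exact hslen
  have hqlenm : clen k₅ q ≤ m := by rw [← hv4len]; exact hqlen
  have hqlenL : clen k₅ q ≤ L₀ := hqlenm.trans hmleL
  have hk₅N : k₅ + 2 ≤ N := hcount k₅ q hqgap hqno hqlenL
  -- q is still a minimizer
  obtain ⟨hqpm, hqpg, hqpl⟩ := pad (show k₅ ≤ N by omega) hε2.le hqmem hqgap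
  have hqmin : m ≤ clen k₅ q := by
    have h0' : (fun i => q (min i k₅)) 0 = x := by
      simp only
      rw [min_eq_left (Nat.zero_le k₅)]
      exact hq0x
    have hN' : (fun i => q (min i k₅)) N = y := by
      simp only
      rw [min_eq_right (by omega : k₅ ≤ N)]
      exact hqky
    have h := hminN (fun i => q (min i k₅)) h0' hN' hqpm hqpg (by rw [hqpl]; exact hqlenL)
    rwa [hqpl] at h
  have hqeq : clen k₅ q = m := le_antisymm hqlenm hqmin
  -- basic facts about q
  have hk₅pos : 1 ≤ k₅ := by
    by_contra h
    have hk0 : k₅ = 0 := by omega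
    apply hxy
    rw [← hq0x, ← hqky, hk0]
  have hregion : ∀ j ≤ k₅, dist x (q j) ≤ L₀ := by
    intro j hj
    have h := dist_le_clen q hj
    rw [hq0x] at h
    linarith [hqlenL]
  have hsegsub : ∀ j, j + 1 ≤ k₅ → segment ℝ (q j) (q (j + 1)) ⊆ K := by
    intro j hj
    exact hseg (q j) (hqmem j (by omega)) (q (j + 1)) (hqmem (j + 1) hj)
      (hregion j (by omega)) ((hqgap j hj).trans (by linarith))
  -- flatness of all corners, by the shortcut argument
  have hflat : ∀ i, i + 2 ≤ k₅ →
      dist (q i) (q (i + 1)) + dist (q (i + 1)) (q (i + 2)) = dist (q i) (q (i + 2)) := by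
    intro i hik
    by_contra hnf
    set a' := midpoint ℝ (q i) (q (i + 1)) with ha'
    set b' := midpoint ℝ (q (i + 1)) (q (i + 2)) with hb'
    set R : ℕ → E := fun t => if t ≤ i then q t else if t = i + 1 then a' else
      if t = i + 2 then b' else q (t - 1) with hR
    have hRe : ∀ t : ℕ, (t ≤ i → R t = q t) ∧ (t = i + 1 → R t = a') ∧
        (t = i + 2 → R t = b') ∧ (i + 3 ≤ t → R t = q (t - 1)) := by
      intro t
      refine ⟨fun h => ?_, fun h => ?_, fun h => ?_, fun h => ?_⟩
      · simp only [hR]; rw [if_pos h]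
      · simp only [hR]; rw [if_neg (by omega), if_pos h]
      · simp only [hR]; rw [if_neg (by omega), if_neg (by omega), if_pos h]
      · simp only [hR]; rw [if_neg (by omega), if_neg (by omega), if_neg (by omega)]
    have ha'K : a' ∈ K := hsegsub i (by omega) (midpoint_mem_segment _ _)
    have hb'K : b' ∈ K := hsegsub (i + 1) (by omega) (midpoint_mem_segment _ _)
    have hdai : dist (q i) a' = dist (q i) (q (i + 1)) / 2 := by
      rw [ha', dist_left_midpoint]
      norm_num
      ring
    have hdbi : dist b' (q (i + 2)) = dist (q (i + 1)) (q (i + 2)) / 2 := by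
      rw [hb', dist_comm, dist_right_midpoint]
      norm_num
      ring
    have hdab : dist a' b' = dist (q i) (q (i + 2)) / 2 := by
      have h : a' - b' = (2⁻¹ : ℝ) • (q i - q (i + 2)) := by
        rw [ha', hb', midpoint_eq_smul_add, midpoint_eq_smul_add, ← smul_sub]
        have h2 : (⅟2 : ℝ) = 2⁻¹ := rfl
        rw [h2]
        congr 1
        abel
      rw [dist_eq_norm, h, norm_smul]
      rw [dist_eq_norm]
      norm_num
      ring
    have hDlt : dist (q i) (q (i + 2)) <
        dist (q i) (q (i + 1)) + dist (q (i + 1)) (q (i + 2)) :=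
      lt_of_le_of_ne (dist_triangle _ _ _) (fun h => hnf h.symm)
    have hR0 : R 0 = x := by rw [(hRe 0).1 (Nat.zero_le i), hq0x]
    have hRlast : R (k₅ + 1) = y := by
      rw [(hRe (k₅ + 1)).2.2.2 (by omega), show k₅ + 1 - 1 = k₅ by omega, hqky]
    have hRmem : ∀ t ≤ k₅ + 1, R t ∈ K := by
      intro t _
      by_cases h1 : t ≤ i
      · rw [(hRe t).1 h1]; exact hqmem t (by omega)
      · by_cases h2 : t = i + 1
        · rw [(hRe t).2.1 h2]; exact ha'K
        · by_cases h3 : t = i + 2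
          · rw [(hRe t).2.2.1 h3]; exact hb'K
          · rw [(hRe t).2.2.2 (by omega)]; exact hqmem (t - 1) (by omega)
    have hRgap : ∀ t < k₅ + 1, dist (R t) (R (t + 1)) ≤ ε / 2 := by
      intro t ht
      by_cases h1 : t < i
      · rw [(hRe t).1 h1.le, (hRe (t + 1)).1 (by omega)]
        exact hqgap t (by omega)
      · by_cases h2 : t = i
        · subst h2
          rw [(hRe t).1 le_rfl, (hRe (t + 1)).2.1 rfl, hdai]
          linarith [hqgap t (by omega)]
        · by_cases h3 : t = i + 1
          · subst h3
            rw [(hRe (i + 1)).2.1 rfl, (hRe (i + 1 + 1)).2.2.1 (by omega), hdab]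
            linarith [hqgap i (by omega), hqgap (i + 1) (by omega), hDlt]
          · by_cases h4 : t = i + 2
            · subst h4
              rw [(hRe (i + 2)).2.2.1 rfl, (hRe (i + 2 + 1)).2.2.2 (by omega),
                show i + 2 + 1 - 1 = i + 2 by omega, hdbi]
              linarith [hqgap (i + 1) (by omega)]
            · rw [(hRe t).2.2.2 (by omega), (hRe (t + 1)).2.2.2 (by omega),
                show t + 1 - 1 = t by omega]
              have h := hqgap (t - 1) (by omega)
              rwa [show t - 1 + 1 = t by omega] at h
    have hRlen : clen (k₅ + 1) R < clen k₅ q := by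
      unfold clen
      rw [← Finset.sum_range_add_sum_Ico (fun t => dist (R t) (R (t + 1)))
            (show i ≤ k₅ + 1 by omega),
          ← Finset.sum_range_add_sum_Ico (fun t => dist (q t) (q (t + 1)))
            (show i ≤ k₅ by omega)]
      have e1 : ∑ t ∈ Finset.range i, dist (R t) (R (t + 1)) =
          ∑ t ∈ Finset.range i, dist (q t) (q (t + 1)) :=
        Finset.sum_congr rfl fun t ht => by
          have h := Finset.mem_range.1 ht
          rw [(hRe t).1 (by omega), (hRe (t + 1)).1 (by omega)]
      have f1 : dist (R i) (R (i + 1)) = dist (q i) (q (i + 1)) / 2 := by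
        rw [(hRe i).1 le_rfl, (hRe (i + 1)).2.1 rfl, hdai]
      have f2 : dist (R (i + 1)) (R (i + 1 + 1)) = dist (q i) (q (i + 2)) / 2 := by
        rw [(hRe (i + 1)).2.1 rfl, (hRe (i + 1 + 1)).2.2.1 (by omega), hdab]
      have f3 : dist (R (i + 2)) (R (i + 2 + 1)) = dist (q (i + 1)) (q (i + 2)) / 2 := by
        rw [(hRe (i + 2)).2.2.1 rfl, (hRe (i + 2 + 1)).2.2.2 (by omega),
          show i + 2 + 1 - 1 = i + 2 by omega, hdbi]
      have e2 : ∑ t ∈ Finset.Ico i (k₅ + 1), dist (R t) (R (t + 1)) =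
          dist (q i) (q (i + 1)) / 2 + (dist (q i) (q (i + 2)) / 2 +
          (dist (q (i + 1)) (q (i + 2)) / 2 +
          ∑ t ∈ Finset.Ico (i + 3) (k₅ + 1), dist (R t) (R (t + 1)))) := by
        rw [Finset.sum_eq_sum_Ico_succ_bot (by omega : i < k₅ + 1),
            Finset.sum_eq_sum_Ico_succ_bot (by omega : i + 1 < k₅ + 1),
            Finset.sum_eq_sum_Ico_succ_bot (by omega : i + 2 < k₅ + 1)]
        rw [f1, f2, f3]
      have e3 : ∑ t ∈ Finset.Ico (i + 3) (k₅ + 1), dist (R t) (R (t + 1)) =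
          ∑ t ∈ Finset.Ico (i + 2) k₅, dist (q t) (q (t + 1)) := by
        rw [Finset.sum_Ico_eq_sum_range, Finset.sum_Ico_eq_sum_range]
        rw [show k₅ + 1 - (i + 3) = k₅ - (i + 2) by omega]
        refine Finset.sum_congr rfl fun t _ => ?_
        rw [(hRe (i + 3 + t)).2.2.2 (by omega), (hRe (i + 3 + t + 1)).2.2.2 (by omega),
          show i + 3 + t - 1 = i + 2 + t by omega,
          show i + 3 + t + 1 - 1 = i + 2 + t + 1 by omega]
      have e4 : ∑ t ∈ Finset.Ico i k₅, dist (q t) (q (t + 1)) =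
          dist (q i) (q (i + 1)) + (dist (q (i + 1)) (q (i + 1 + 1)) +
          ∑ t ∈ Finset.Ico (i + 2) k₅, dist (q t) (q (t + 1))) := by
        rw [Finset.sum_eq_sum_Ico_succ_bot (by omega : i < k₅),
            Finset.sum_eq_sum_Ico_succ_bot (by omega : i + 1 < k₅)]
      have hd2 : dist (q (i + 1)) (q (i + 1 + 1)) = dist (q (i + 1)) (q (i + 2)) := rfl
      rw [e1, e2, e3, e4, hd2]
      linarith
    -- contradiction with minimality of m
    obtain ⟨hrm, hrg, hrl⟩ := pad (show k₅ + 1 ≤ N by omega) hε2.le hRmem hRgap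
    have h0' : (fun j => R (min j (k₅ + 1))) 0 = x := by
      simp only
      rw [min_eq_left (Nat.zero_le _)]
      exact hR0
    have hN' : (fun j => R (min j (k₅ + 1))) N = y := by
      simp only
      rw [min_eq_right (by omega : k₅ + 1 ≤ N)]
      exact hRlast
    have hlt : clen (k₅ + 1) R < m := by rw [← hqeq]; exact hRlen
    have h := hminN (fun j => R (min j (k₅ + 1))) h0' hN' hrm hrg (by rw [hrl]; linarith)
    rw [hrl] at h
    linarith
  -- consecutive vertices of q are distinct
  have hne : ∀ i < k₅, q i ≠ q (i + 1) := by
    intro i hi heq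
    by_cases h : i + 2 ≤ k₅
    · have h2 := hqno i h
      rw [heq] at h2
      have h3 := hqgap (i + 1) (by omega)
      rw [show i + 1 + 1 = i + 2 from rfl] at h3
      linarith
    · have hik : i + 1 = k₅ := by omega
      rcases Nat.eq_zero_or_pos i with rfl | hipos
      · exact hxy (by rw [← hq0x, heq, hik, hqky])
      · obtain ⟨j, rfl⟩ : ∃ j, i = j + 1 := ⟨i - 1, by omega⟩
        have h2 := hqno j (by omega)
        rw [show j + 2 = j + 1 + 1 from rfl, ← heq] at h2
        have h3 := hqgap j (by omega)
        linarith
  -- conclude with the flat chain lemma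
  obtain ⟨_, _, hcov⟩ := flat_chain k₅ q hk₅pos hne hflat
  intro p hp
  have hp' : p ∈ segment ℝ (q 0) (q k₅) := by rw [hq0x, hqky]; exact hp
  obtain ⟨i, hik, hpi⟩ := hcov p hp'
  exact hsegsub i hik hpi

end Beardon

/-- Beardon's theorem: a closed set `K ⊆ ℝ^d` is convex iff it is connected and
locally convex at every point. -/
theorem stmt3 (d : ℕ) (K : Set (EuclideanSpace ℝ (Fin d))) (hK : IsClosed K) :
    Convex ℝ K ↔
      (IsPreconnected K ∧
        ∀ x ∈ K, ∃ U : Set (EuclideanSpace ℝ (Fin d)),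
          IsOpen U ∧ x ∈ U ∧ Convex ℝ (K ∩ U)) := by
  constructor
  · intro h
    exact ⟨h.isPreconnected, fun x hx => ⟨Set.univ, isOpen_univ, Set.mem_univ x,
      by simpa [Set.inter_univ] using h⟩⟩
  · rintro ⟨hconn, hloc⟩
    exact Beardon.key hK hconn hloc
end

section
/- Let P₁, P₂ be full-dimensional convex polytopes and F a codimension-2 face of P₁ × P₂ of the form F₁ × F₂ where F₁ is a facet of P₁ and F₂ is a facet of P₂. If P₁ and P₂ are centrally symmetric with centrally symmetric facets, then the belt of P₁ × P₂ determined by F consists of exactly four facets: F₁ × P₂, F₁′ × P₂, P₁ × F₂, and P₁ × F₂′, where F₁′, F₂′ are the facets antipodal to F₁, F₂. -/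
/-- `F` is a facet of `P`: a nonempty exposed face of codimension 1. -/
def IsFacet {E : Type*} [NormedAddCommGroup E] [NormedSpace ℝ E]
    (P F : Set E) : Prop :=
  IsExposed ℝ P F ∧ F.Nonempty ∧
    Module.finrank ℝ (vectorSpan ℝ F) + 1 = Module.finrank ℝ E

/-- The point reflection `x ↦ 2c - x` about `c`. -/
def pointReflection {E : Type*} [NormedAddCommGroup E] [NormedSpace ℝ E]
    (c : E) : E → E := fun x => (2 : ℝ) • c - x

open Module

section Helpers

variable {E : Type*} [NormedAddCommGroup E] [NormedSpace ℝ E]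

lemma pointReflection_invol (c : E) (x : E) :
    pointReflection c (pointReflection c x) = x := by
  simp [pointReflection]

lemma mem_pointReflection_image {c : E} {F : Set E} {x : E} :
    x ∈ pointReflection c '' F ↔ pointReflection c x ∈ F := by
  constructor
  · rintro ⟨a, ha, rfl⟩; rwa [pointReflection_invol]
  · intro h; exact ⟨_, h, pointReflection_invol c x⟩

lemma vectorSpan_pointReflection (c : E) (F : Set E) :
    vectorSpan ℝ (pointReflection c '' F) = vectorSpan ℝ F := by
  rw [vectorSpan_def, vectorSpan_def]
  congr 1
  ext z
  simp only [Set.mem_vsub]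
  constructor
  · rintro ⟨_, ⟨x, hx, rfl⟩, _, ⟨y, hy, rfl⟩, rfl⟩
    exact ⟨y, hy, x, hx, by simp only [pointReflection, vsub_eq_sub]; abel⟩
  · rintro ⟨x, hx, y, hy, rfl⟩
    exact ⟨_, ⟨y, hy, rfl⟩, _, ⟨x, hx, rfl⟩,
      by simp only [pointReflection, vsub_eq_sub]; abel⟩

lemma map_pointReflection (l : E →L[ℝ] ℝ) (c x : E) :
    l (pointReflection c x) = 2 * l c - l x := by
  simp [pointReflection, two_smul, map_sub, map_add]; ring

variable [FiniteDimensional ℝ E]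

lemma vectorSpan_eq_top_of_interior {P : Set E} (hfull : (interior P).Nonempty) :
    vectorSpan ℝ P = ⊤ := by
  have h : affineSpan ℝ P = ⊤ :=
    affineSpan_eq_top_of_nonempty_interior
      (hfull.mono (interior_mono (subset_convexHull ℝ P)))
  rw [← direction_affineSpan, h, AffineSubspace.direction_top]

lemma finrank_vectorSpan_eq_top_of_interior {P : Set E} (hfull : (interior P).Nonempty) :
    finrank ℝ (vectorSpan ℝ P) = finrank ℝ E := by
  rw [vectorSpan_eq_top_of_interior hfull, finrank_top]

lemma vectorSpan_maxface_le_ker (P : Set E) (l : E →L[ℝ] ℝ) :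
    vectorSpan ℝ {x ∈ P | ∀ y ∈ P, l y ≤ l x} ≤ LinearMap.ker (l : E →ₗ[ℝ] ℝ) := by
  rw [vectorSpan_def, Submodule.span_le]
  rintro z hz
  rw [Set.mem_vsub] at hz
  obtain ⟨x, hx, y, hy, rfl⟩ := hz
  have h : l x = l y := le_antisymm (hy.2 x hx.1) (hx.2 y hy.1)
  simp [LinearMap.mem_ker, vsub_eq_sub, map_sub, h]

lemma finrank_ker_add_one {l : E →L[ℝ] ℝ} (hl : l ≠ 0) :
    finrank ℝ (LinearMap.ker (l : E →ₗ[ℝ] ℝ)) + 1 = finrank ℝ E := by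
  obtain ⟨x₀, hx₀⟩ : ∃ x, l x ≠ 0 := by
    by_contra h
    push_neg at h
    exact hl (by ext x; simp [h x])
  have hsurj : Function.Surjective l := by
    intro r
    exact ⟨(r / l x₀) • x₀, by rw [map_smul, smul_eq_mul]; field_simp⟩
  have htop : LinearMap.range (l : E →ₗ[ℝ] ℝ) = ⊤ := LinearMap.range_eq_top.2 hsurj
  have h := LinearMap.finrank_range_add_finrank_ker (l : E →ₗ[ℝ] ℝ)
  rw [htop, finrank_top, finrank_self] at h
  have hk : LinearMap.ker (l : E →ₗ[ℝ] ℝ) = LinearMap.ker (l : E →ₗ[ℝ] ℝ) := rfl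
  rw [hk]
  omega

/-- A facet is the max-face of a nonzero functional whose kernel is its
vector span. -/
lemma facet_spec {P F : Set E} (hfull : (interior P).Nonempty) (hF : IsFacet P F) :
    ∃ l : E →L[ℝ] ℝ, l ≠ 0 ∧ F = {x ∈ P | ∀ y ∈ P, l y ≤ l x} ∧
      vectorSpan ℝ F = LinearMap.ker (l : E →ₗ[ℝ] ℝ) := by
  obtain ⟨l, hl⟩ := hF.1 hF.2.1
  have hne : l ≠ 0 := by
    rintro rfl
    have hFP : F = P := by rw [hl]; ext x; simp
    have := hF.2.2
    rw [hFP, finrank_vectorSpan_eq_top_of_interior hfull] at this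
    omega
  refine ⟨l, hne, hl, ?_⟩
  have h1 : vectorSpan ℝ F ≤ LinearMap.ker (l : E →ₗ[ℝ] ℝ) := by
    rw [hl]; exact vectorSpan_maxface_le_ker P l
  refine Submodule.eq_of_le_of_finrank_eq h1 ?_
  have h2 := finrank_ker_add_one hne
  have h3 := hF.2.2
  omega

lemma maxface_smul_pos {P : Set E} {l : E →L[ℝ] ℝ} {t : ℝ} (ht : 0 < t)
    {m : E →L[ℝ] ℝ} (hm : ∀ x, m x = t * l x) :
    {x ∈ P | ∀ y ∈ P, m y ≤ m x} = {x ∈ P | ∀ y ∈ P, l y ≤ l x} := by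
  ext x
  simp only [Set.mem_setOf_eq, hm, and_congr_right_iff]
  intro _
  exact forall₂_congr fun y _ => mul_le_mul_iff_right₀ ht

/-- Reflection sends the max-face of `l` to the min-face of `l`. -/
lemma reflect_maxface {P : Set E} (c : E)
    (hsym : ∀ x, x ∈ P ↔ pointReflection c x ∈ P) (l : E →L[ℝ] ℝ) :
    pointReflection c '' {x ∈ P | ∀ y ∈ P, l y ≤ l x} =
      {x ∈ P | ∀ y ∈ P, l x ≤ l y} := by
  ext x
  rw [mem_pointReflection_image]
  simp only [Set.mem_setOf_eq]
  constructor
  · rintro ⟨h1, h2⟩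
    refine ⟨(hsym x).2 h1, fun y hy => ?_⟩
    have := h2 _ ((hsym y).1 hy)
    rw [map_pointReflection, map_pointReflection] at this
    linarith
  · rintro ⟨h1, h2⟩
    refine ⟨(hsym x).1 h1, fun y hy => ?_⟩
    by_cases hy' : pointReflection c y ∈ P
    · have := h2 _ hy'
      rw [map_pointReflection]
      -- need l y ≤ l (pointReflection c x) = 2 l c - l x
      have hy2 : y = pointReflection c (pointReflection c y) :=
        (pointReflection_invol c y).symm
      rw [hy2, map_pointReflection]
      linarith
    · exact absurd ((hsym y).1 hy) hy'

lemma minface_eq_neg_maxface (P : Set E) (l : E →L[ℝ] ℝ) :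
    {x ∈ P | ∀ y ∈ P, l x ≤ l y} = {x ∈ P | ∀ y ∈ P, (-l) y ≤ (-l) x} := by
  ext x; simp only [Set.mem_setOf_eq, ContinuousLinearMap.neg_apply, neg_le_neg_iff]

/-- The reflection of a facet of a centrally symmetric set is a facet. -/
lemma isFacet_pointReflection {P F : Set E} (hfull : (interior P).Nonempty) (c : E)
    (hsym : ∀ x, x ∈ P ↔ pointReflection c x ∈ P) (hF : IsFacet P F) :
    IsFacet P (pointReflection c '' F) := by
  obtain ⟨l, hl0, hl, -⟩ := facet_spec hfull hF
  refine ⟨fun _ => ⟨-l, ?_⟩, hF.2.1.image _, ?_⟩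
  · rw [hl, reflect_maxface c hsym l, minface_eq_neg_maxface]
  · rw [vectorSpan_pointReflection]; exact hF.2.2

lemma eq_smul_of_ker_eq {l m : E →L[ℝ] ℝ} (hl : l ≠ 0) (hm : m ≠ 0)
    (h : LinearMap.ker (m : E →ₗ[ℝ] ℝ) = LinearMap.ker (l : E →ₗ[ℝ] ℝ)) :
    ∃ t : ℝ, t ≠ 0 ∧ ∀ x, m x = t * l x := by
  obtain ⟨x₀, hx₀⟩ : ∃ x, l x ≠ 0 := by
    by_contra hc; push_neg at hc
    exact hl (by ext x; simp [hc x])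
  have hmx₀ : m x₀ ≠ 0 := by
    intro hz
    have : x₀ ∈ LinearMap.ker (l : E →ₗ[ℝ] ℝ) := h ▸ (LinearMap.mem_ker.2 hz)
    exact hx₀ (LinearMap.mem_ker.1 this)
  refine ⟨m x₀ / l x₀, div_ne_zero hmx₀ hx₀, fun x => ?_⟩
  have hk : x - (l x / l x₀) • x₀ ∈ LinearMap.ker (l : E →ₗ[ℝ] ℝ) := by
    rw [LinearMap.mem_ker]
    simp only [map_sub, map_smul, smul_eq_mul, ContinuousLinearMap.coe_coe]
    field_simp
    ring
  rw [← h, LinearMap.mem_ker] at hk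
  simp only [map_sub, map_smul, smul_eq_mul, sub_eq_zero, ContinuousLinearMap.coe_coe] at hk
  rw [hk]; field_simp

/-- Dichotomy: a facet parallel to `F` is `F` or its antipode. -/
lemma parallel_facet_dichotomy {P : Set E} (hfull : (interior P).Nonempty) (c : E)
    (hsym : ∀ x, x ∈ P ↔ pointReflection c x ∈ P) {F G : Set E}
    (hF : IsFacet P F) (hG : IsFacet P G)
    (hpar : vectorSpan ℝ G = vectorSpan ℝ F) :
    G = F ∨ G = pointReflection c '' F := by
  obtain ⟨l, hl0, hl, hlk⟩ := facet_spec hfull hF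
  obtain ⟨m, hm0, hm, hmk⟩ := facet_spec hfull hG
  have hker : LinearMap.ker (m : E →ₗ[ℝ] ℝ) = LinearMap.ker (l : E →ₗ[ℝ] ℝ) := by
    rw [← hlk, ← hmk, hpar]
  obtain ⟨t, ht0, ht⟩ := eq_smul_of_ker_eq hl0 hm0 hker
  rcases lt_or_gt_of_ne ht0 with htneg | htpos
  · right
    rw [hl, reflect_maxface c hsym l, hm]
    ext x
    simp only [Set.mem_setOf_eq, ht, and_congr_right_iff]
    intro _
    refine forall₂_congr fun y _ => ?_
    constructor
    · intro hle; nlinarith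
    · intro hle; nlinarith
  · left
    rw [hm, hl, maxface_smul_pos htpos ht]

end Helpers

section Prod

variable {E F : Type*} [NormedAddCommGroup E] [NormedSpace ℝ E]
  [NormedAddCommGroup F] [NormedSpace ℝ F]

lemma vectorSpan_prod {A : Set E} {B : Set F} (hA : A.Nonempty) (hB : B.Nonempty) :
    vectorSpan ℝ (A ×ˢ B) = (vectorSpan ℝ A).prod (vectorSpan ℝ B) := by
  apply le_antisymm
  · rw [vectorSpan_def, Submodule.span_le]
    rintro z hz
    rw [Set.mem_vsub] at hz
    obtain ⟨⟨a, b⟩, ⟨ha, hb⟩, ⟨a', b'⟩, ⟨ha', hb'⟩, rfl⟩ := hz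
    refine Submodule.mem_prod.2 ⟨?_, ?_⟩
    · exact Submodule.subset_span (Set.mem_vsub.2 ⟨a, ha, a', ha', rfl⟩)
    · exact Submodule.subset_span (Set.mem_vsub.2 ⟨b, hb, b', hb', rfl⟩)
  · rw [LinearMap.prod_eq_sup_map, sup_le_iff]
    obtain ⟨a₀, ha₀⟩ := hA
    obtain ⟨b₀, hb₀⟩ := hB
    constructor
    · rw [vectorSpan_def, Submodule.map_span, Submodule.span_le]
      rintro z ⟨w, hw, rfl⟩
      rw [Set.mem_vsub] at hw
      obtain ⟨a, ha, a', ha', rfl⟩ := hw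
      apply Submodule.subset_span
      rw [Set.mem_vsub]
      exact ⟨(a, b₀), ⟨ha, hb₀⟩, (a', b₀), ⟨ha', hb₀⟩, by
        simp [vsub_eq_sub, Prod.ext_iff, LinearMap.inl_apply]⟩
    · rw [vectorSpan_def, Submodule.map_span, Submodule.span_le]
      rintro z ⟨w, hw, rfl⟩
      rw [Set.mem_vsub] at hw
      obtain ⟨b, hb, b', hb', rfl⟩ := hw
      apply Submodule.subset_span
      rw [Set.mem_vsub]
      exact ⟨(a₀, b), ⟨ha₀, hb⟩, (a₀, b'), ⟨ha₀, hb'⟩, by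
        simp [vsub_eq_sub, Prod.ext_iff, LinearMap.inr_apply]⟩

variable [FiniteDimensional ℝ E] [FiniteDimensional ℝ F]

lemma finrank_submodule_prod (p : Submodule ℝ E) (q : Submodule ℝ F) :
    finrank ℝ (p.prod q) = finrank ℝ p + finrank ℝ q := by
  rw [LinearMap.prod_eq_sup_map]
  have h1 : finrank ℝ (p.map (LinearMap.inl ℝ E F)) = finrank ℝ p :=
    ((p.equivMapOfInjective _ LinearMap.inl_injective).finrank_eq).symm
  have h2 : finrank ℝ (q.map (LinearMap.inr ℝ E F)) = finrank ℝ q :=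
    ((q.equivMapOfInjective _ LinearMap.inr_injective).finrank_eq).symm
  have hinf : (p.map (LinearMap.inl ℝ E F)) ⊓ (q.map (LinearMap.inr ℝ E F)) = ⊥ := by
    rw [Submodule.map_inl, Submodule.map_inr, Submodule.prod_inf_prod]
    simp
  have := Submodule.finrank_sup_add_finrank_inf_eq
    (p.map (LinearMap.inl ℝ E F)) (q.map (LinearMap.inr ℝ E F))
  rw [hinf, finrank_bot, add_zero, h1, h2] at this
  exact this

end Prod

section ProdFacet

variable {E F : Type*} [NormedAddCommGroup E] [NormedSpace ℝ E]
  [NormedAddCommGroup F] [NormedSpace ℝ F]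
  [FiniteDimensional ℝ E] [FiniteDimensional ℝ F]

lemma maxface_eq_self_of_finrank {P : Set E} (l : E →L[ℝ] ℝ)
    (h : finrank ℝ (vectorSpan ℝ {x ∈ P | ∀ y ∈ P, l y ≤ l x}) = finrank ℝ E) :
    {x ∈ P | ∀ y ∈ P, l y ≤ l x} = P := by
  have htop : vectorSpan ℝ {x ∈ P | ∀ y ∈ P, l y ≤ l x} = ⊤ :=
    Submodule.eq_top_of_finrank_eq h
  have hker := vectorSpan_maxface_le_ker P l
  rw [htop, top_le_iff] at hker
  have hzero : ∀ y, l y = 0 := fun y =>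
    LinearMap.mem_ker.1 (hker ▸ Submodule.mem_top (x := y))
  ext x
  simp [hzero]

lemma isFacet_prod_left {P : Set E} {Q : Set F} {G₁ : Set E}
    (hQfull : (interior Q).Nonempty) (hG₁ : IsFacet P G₁) :
    IsFacet (P ×ˢ Q) (G₁ ×ˢ Q) := by
  have hQne : Q.Nonempty := hQfull.mono interior_subset
  obtain ⟨l, hl⟩ := hG₁.1 hG₁.2.1
  refine ⟨fun _ => ⟨l.comp (ContinuousLinearMap.fst ℝ E F), ?_⟩, hG₁.2.1.prod hQne, ?_⟩
  · ext ⟨x, y⟩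
    simp only [Set.mem_prod, Set.mem_setOf_eq, ContinuousLinearMap.comp_apply,
      ContinuousLinearMap.coe_fst']
    rw [hl]
    constructor
    · rintro ⟨⟨hxP, hxmax⟩, hy⟩
      exact ⟨⟨hxP, hy⟩, fun q hq => hxmax q.1 hq.1⟩
    · rintro ⟨⟨hxP, hy⟩, hmax⟩
      exact ⟨⟨hxP, fun x' hx' => hmax (x', y) ⟨hx', hy⟩⟩, hy⟩
  · rw [vectorSpan_prod hG₁.2.1 hQne, finrank_submodule_prod,
      vectorSpan_eq_top_of_interior hQfull, finrank_top, Module.finrank_prod]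
    have := hG₁.2.2
    omega

lemma isFacet_prod_right {P : Set E} {Q : Set F} {G₂ : Set F}
    (hPfull : (interior P).Nonempty) (hG₂ : IsFacet Q G₂) :
    IsFacet (P ×ˢ Q) (P ×ˢ G₂) := by
  have hPne : P.Nonempty := hPfull.mono interior_subset
  obtain ⟨l, hl⟩ := hG₂.1 hG₂.2.1
  refine ⟨fun _ => ⟨l.comp (ContinuousLinearMap.snd ℝ E F), ?_⟩, hPne.prod hG₂.2.1, ?_⟩
  · ext ⟨x, y⟩
    simp only [Set.mem_prod, Set.mem_setOf_eq, ContinuousLinearMap.comp_apply,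
      ContinuousLinearMap.coe_snd']
    rw [hl]
    constructor
    · rintro ⟨hx, ⟨hyQ, hymax⟩⟩
      exact ⟨⟨hx, hyQ⟩, fun q hq => hymax q.2 hq.2⟩
    · rintro ⟨⟨hx, hyQ⟩, hmax⟩
      exact ⟨hx, ⟨hyQ, fun y' hy' => hmax (x, y') ⟨hx, hy'⟩⟩⟩
  · rw [vectorSpan_prod hPne hG₂.2.1, finrank_submodule_prod,
      vectorSpan_eq_top_of_interior hPfull, finrank_top, Module.finrank_prod]
    have := hG₂.2.2
    omega

lemma isFacet_prod_elim {P : Set E} {Q : Set F} {G : Set (E × F)}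
    (hPfull : (interior P).Nonempty) (hQfull : (interior Q).Nonempty)
    (hG : IsFacet (P ×ˢ Q) G) :
    (∃ G₁, IsFacet P G₁ ∧ G = G₁ ×ˢ Q) ∨ (∃ G₂, IsFacet Q G₂ ∧ G = P ×ˢ G₂) := by
  obtain ⟨l, hl⟩ := hG.1 hG.2.1
  set l₁ : E →L[ℝ] ℝ := l.comp (ContinuousLinearMap.inl ℝ E F) with hl₁def
  set l₂ : F →L[ℝ] ℝ := l.comp (ContinuousLinearMap.inr ℝ E F) with hl₂def
  have key : ∀ p : E × F, l p = l₁ p.1 + l₂ p.2 := by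
    rintro ⟨x, y⟩
    rw [hl₁def, hl₂def]
    simp only [ContinuousLinearMap.comp_apply, ContinuousLinearMap.inl_apply,
      ContinuousLinearMap.inr_apply]
    rw [← map_add]
    norm_num
  set G₁ := {x ∈ P | ∀ y ∈ P, l₁ y ≤ l₁ x} with hG₁def
  set G₂ := {x ∈ Q | ∀ y ∈ Q, l₂ y ≤ l₂ x} with hG₂def
  have hdec : G = G₁ ×ˢ G₂ := by
    rw [hl]
    ext ⟨x, y⟩
    simp only [Set.mem_prod, Set.mem_setOf_eq, hG₁def, hG₂def]
    constructor
    · rintro ⟨⟨hxP, hyQ⟩, hmax⟩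
      refine ⟨⟨hxP, fun x' hx' => ?_⟩, ⟨hyQ, fun y' hy' => ?_⟩⟩
      · have := hmax (x', y) ⟨hx', hyQ⟩
        rw [key, key] at this
        simpa using this
      · have := hmax (x, y') ⟨hxP, hy'⟩
        rw [key, key] at this
        simpa using this
    · rintro ⟨⟨hxP, h1⟩, ⟨hyQ, h2⟩⟩
      exact ⟨⟨hxP, hyQ⟩, fun q hq => by
        rw [key, key]; exact add_le_add (h1 q.1 hq.1) (h2 q.2 hq.2)⟩
  have hGne := hG.2.1
  rw [hdec] at hGne
  obtain ⟨⟨a, b⟩, ⟨haG₁, hbG₂⟩⟩ := hGne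
  have hG₁ne : G₁.Nonempty := ⟨a, haG₁⟩
  have hG₂ne : G₂.Nonempty := ⟨b, hbG₂⟩
  have hvs : finrank ℝ (vectorSpan ℝ G₁) + finrank ℝ (vectorSpan ℝ G₂) + 1
      = finrank ℝ E + finrank ℝ F := by
    have h := hG.2.2
    rw [hdec, vectorSpan_prod hG₁ne hG₂ne, finrank_submodule_prod,
      Module.finrank_prod] at h
    omega
  have hle1 : finrank ℝ (vectorSpan ℝ G₁) ≤ finrank ℝ E := (vectorSpan ℝ G₁).finrank_le
  have hle2 : finrank ℝ (vectorSpan ℝ G₂) ≤ finrank ℝ F := (vectorSpan ℝ G₂).finrank_le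
  by_cases h2 : finrank ℝ (vectorSpan ℝ G₂) = finrank ℝ F
  · left
    have hG₂Q : G₂ = Q := maxface_eq_self_of_finrank l₂ h2
    refine ⟨G₁, ⟨fun _ => ⟨l₁, rfl⟩, hG₁ne, by omega⟩, by rw [hdec, hG₂Q]⟩
  · right
    have h1 : finrank ℝ (vectorSpan ℝ G₁) = finrank ℝ E := by omega
    have hG₁P : G₁ = P := maxface_eq_self_of_finrank l₁ h1
    refine ⟨G₂, ⟨fun _ => ⟨l₂, rfl⟩, hG₂ne, by omega⟩, by rw [hdec, hG₁P]⟩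

end ProdFacet

/-- The belt of `P₁ × P₂` determined by a codimension-2 face of the form
`F₁ × F₂` (where `Fᵢ` is a facet of `Pᵢ`) consists of exactly the four facets
`F₁ × P₂`, `F₁′ × P₂`, `P₁ × F₂`, `P₁ × F₂′`, where `Fᵢ′` is antipodal to `Fᵢ`. -/
theorem stmt9 (d₁ d₂ : ℕ)
    (P₁ : Set (EuclideanSpace ℝ (Fin d₁))) (P₂ : Set (EuclideanSpace ℝ (Fin d₂)))
    (hP₁ : ∃ S : Finset (EuclideanSpace ℝ (Fin d₁)), P₁ = convexHull ℝ (S : Set (EuclideanSpace ℝ (Fin d₁))))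
    (hP₂ : ∃ S : Finset (EuclideanSpace ℝ (Fin d₂)), P₂ = convexHull ℝ (S : Set (EuclideanSpace ℝ (Fin d₂))))
    (hfull₁ : (interior P₁).Nonempty) (hfull₂ : (interior P₂).Nonempty)
    (c₁ : EuclideanSpace ℝ (Fin d₁)) (c₂ : EuclideanSpace ℝ (Fin d₂))
    (hsym₁ : ∀ x, x ∈ P₁ ↔ pointReflection c₁ x ∈ P₁)
    (hsym₂ : ∀ x, x ∈ P₂ ↔ pointReflection c₂ x ∈ P₂)
    (hfsym₁ : ∀ F, IsFacet P₁ F → ∃ c, ∀ x, x ∈ F ↔ pointReflection c x ∈ F)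
    (hfsym₂ : ∀ F, IsFacet P₂ F → ∃ c, ∀ x, x ∈ F ↔ pointReflection c x ∈ F)
    (F₁ : Set (EuclideanSpace ℝ (Fin d₁))) (F₂ : Set (EuclideanSpace ℝ (Fin d₂)))
    (hF₁ : IsFacet P₁ F₁) (hF₂ : IsFacet P₂ F₂) :
    {G : Set (EuclideanSpace ℝ (Fin d₁) × EuclideanSpace ℝ (Fin d₂)) |
        IsFacet (P₁ ×ˢ P₂) G ∧ vectorSpan ℝ (F₁ ×ˢ F₂) ≤ vectorSpan ℝ G} =
      {F₁ ×ˢ P₂, (pointReflection c₁ '' F₁) ×ˢ P₂,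
        P₁ ×ˢ F₂, P₁ ×ˢ (pointReflection c₂ '' F₂)} := by
  have hP₁ne : P₁.Nonempty := hfull₁.mono interior_subset
  have hP₂ne : P₂.Nonempty := hfull₂.mono interior_subset
  have hspanFF : vectorSpan ℝ (F₁ ×ˢ F₂)
      = (vectorSpan ℝ F₁).prod (vectorSpan ℝ F₂) := vectorSpan_prod hF₁.2.1 hF₂.2.1
  ext G
  simp only [Set.mem_setOf_eq, Set.mem_insert_iff, Set.mem_singleton_iff]
  constructor
  · rintro ⟨hGfacet, hGspan⟩
    rcases isFacet_prod_elim hfull₁ hfull₂ hGfacet with ⟨G₁, hG₁, rfl⟩ | ⟨G₂, hG₂, rfl⟩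
    · have h2 : vectorSpan ℝ (G₁ ×ˢ P₂)
          = (vectorSpan ℝ G₁).prod (vectorSpan ℝ P₂) := vectorSpan_prod hG₁.2.1 hP₂ne
      have hle : vectorSpan ℝ F₁ ≤ vectorSpan ℝ G₁ := by
        intro v hv
        have hm : (v, (0 : EuclideanSpace ℝ (Fin d₂))) ∈ vectorSpan ℝ (F₁ ×ˢ F₂) := by
          rw [hspanFF]
          exact Submodule.mem_prod.2 ⟨hv, Submodule.zero_mem _⟩
        have := hGspan hm
        rw [h2] at this
        exact (Submodule.mem_prod.1 this).1
      have heq : vectorSpan ℝ F₁ = vectorSpan ℝ G₁ :=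
        Submodule.eq_of_le_of_finrank_eq hle (by
          have := hF₁.2.2; have := hG₁.2.2; omega)
      rcases parallel_facet_dichotomy hfull₁ c₁ hsym₁ hF₁ hG₁ heq.symm with h | h
      · left; rw [h]
      · right; left; rw [h]
    · have h2 : vectorSpan ℝ (P₁ ×ˢ G₂)
          = (vectorSpan ℝ P₁).prod (vectorSpan ℝ G₂) := vectorSpan_prod hP₁ne hG₂.2.1
      have hle : vectorSpan ℝ F₂ ≤ vectorSpan ℝ G₂ := by
        intro v hv
        have hm : ((0 : EuclideanSpace ℝ (Fin d₁)), v) ∈ vectorSpan ℝ (F₁ ×ˢ F₂) := by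
          rw [hspanFF]
          exact Submodule.mem_prod.2 ⟨Submodule.zero_mem _, hv⟩
        have := hGspan hm
        rw [h2] at this
        exact (Submodule.mem_prod.1 this).2
      have heq : vectorSpan ℝ F₂ = vectorSpan ℝ G₂ :=
        Submodule.eq_of_le_of_finrank_eq hle (by
          have := hF₂.2.2; have := hG₂.2.2; omega)
      rcases parallel_facet_dichotomy hfull₂ c₂ hsym₂ hF₂ hG₂ heq.symm with h | h
      · right; right; left; rw [h]
      · right; right; right; rw [h]
  · have hspanP₂ : vectorSpan ℝ F₂ ≤ vectorSpan ℝ P₂ := by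
      rw [vectorSpan_eq_top_of_interior hfull₂]; exact le_top
    have hspanP₁ : vectorSpan ℝ F₁ ≤ vectorSpan ℝ P₁ := by
      rw [vectorSpan_eq_top_of_interior hfull₁]; exact le_top
    rintro (rfl | rfl | rfl | rfl)
    · refine ⟨isFacet_prod_left hfull₂ hF₁, ?_⟩
      rw [hspanFF, vectorSpan_prod hF₁.2.1 hP₂ne]
      exact Submodule.prod_mono le_rfl hspanP₂
    · refine ⟨isFacet_prod_left hfull₂ (isFacet_pointReflection hfull₁ c₁ hsym₁ hF₁), ?_⟩
      rw [hspanFF, vectorSpan_prod (hF₁.2.1.image _) hP₂ne, vectorSpan_pointReflection]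
      exact Submodule.prod_mono le_rfl hspanP₂
    · refine ⟨isFacet_prod_right hfull₁ hF₂, ?_⟩
      rw [hspanFF, vectorSpan_prod hP₁ne hF₂.2.1]
      exact Submodule.prod_mono hspanP₁ le_rfl
    · refine ⟨isFacet_prod_right hfull₁ (isFacet_pointReflection hfull₂ c₂ hsym₂ hF₂), ?_⟩
      rw [hspanFF, vectorSpan_prod hP₁ne (hF₂.2.1.image _), vectorSpan_pointReflection]
      exact Submodule.prod_mono hspanP₁ le_rfl
end

section
/- Let P be a parallelohedron tiling ℝ^d by translates along a lattice Λ, and suppose the centers lattice decomposes as Λ = Λ₁ ⊕ Λ₂ (direct sum of subgroups) such that the set P + Λ₁ is convex. Then P + Λ₁ = span(Λ₁) ⊕ π(P) (Minkowski direct sum), where π is the linear projection of ℝ^d onto span(Λ₂) along span(Λ₁). -/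
open Pointwise

/-- Face-to-face tiling of the whole space by translates of `P` over the
lattice `L`: translates cover the space, distinct translates have disjoint
interiors, and any nonempty intersection of two tiles is a face of each. -/
def IsFaceToFaceTiling {E : Type*} [NormedAddCommGroup E] [NormedSpace ℝ E]
    (P : Set E) (L : AddSubgroup E) : Prop :=
  (⋃ l ∈ (L : Set E), l +ᵥ P) = Set.univ ∧
  (∀ l₁ ∈ L, ∀ l₂ ∈ L, l₁ ≠ l₂ →
      interior (l₁ +ᵥ P) ∩ interior (l₂ +ᵥ P) = ∅) ∧
  (∀ l₁ ∈ L, ∀ l₂ ∈ L, ((l₁ +ᵥ P) ∩ (l₂ +ᵥ P)).Nonempty →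
      IsExtreme ℝ (l₁ +ᵥ P) ((l₁ +ᵥ P) ∩ (l₂ +ᵥ P)))

/-- If `Λ = Λ₁ ⊕ Λ₂` and `P + Λ₁` is convex, then
`P + Λ₁ = span Λ₁ ⊕ π(P)`, where `π` projects onto `span Λ₂` along `span Λ₁`. -/
theorem stmt10 (d : ℕ) (P : Set (EuclideanSpace ℝ (Fin d)))
    (hpoly : ∃ S : Finset (EuclideanSpace ℝ (Fin d)), P = convexHull ℝ (S : Set (EuclideanSpace ℝ (Fin d))))
    (Λ Λ₁ Λ₂ : AddSubgroup (EuclideanSpace ℝ (Fin d)))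
    (htile : IsFaceToFaceTiling P Λ)
    (hsup : Λ₁ ⊔ Λ₂ = Λ) (hinf : Λ₁ ⊓ Λ₂ = ⊥)
    (V₁ V₂ : Submodule ℝ (EuclideanSpace ℝ (Fin d)))
    (hV₁ : V₁ = Submodule.span ℝ (Λ₁ : Set (EuclideanSpace ℝ (Fin d))))
    (hV₂ : V₂ = Submodule.span ℝ (Λ₂ : Set (EuclideanSpace ℝ (Fin d))))
    (hcompl : IsCompl V₂ V₁)
    (hconv : Convex ℝ (P + (Λ₁ : Set (EuclideanSpace ℝ (Fin d))))) :
    P + (Λ₁ : Set (EuclideanSpace ℝ (Fin d))) =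
      (V₁ : Set (EuclideanSpace ℝ (Fin d))) +
        (fun x => ((Submodule.linearProjOfIsCompl V₂ V₁ hcompl) x :
          EuclideanSpace ℝ (Fin d))) '' P := by
  set Q := P + (Λ₁ : Set (EuclideanSpace ℝ (Fin d))) with hQ
  set π := fun x => ((Submodule.linearProjOfIsCompl V₂ V₁ hcompl) x :
          EuclideanSpace ℝ (Fin d)) with hπ
  -- Key fact: Q is invariant under translations by V₁
  have key : ∀ v ∈ V₁, ∀ t : ℝ, ∀ q ∈ Q, q + t • v ∈ Q := by
    rw [hV₁]
    intro v hv
    induction hv using Submodule.span_induction with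
    | mem x hx =>
      intro t q hq
      obtain ⟨p, hp, μ, hμ, rfl⟩ := hq
      have hmem : ∀ m : ℤ, p + μ + (m : ℝ) • x ∈ Q := by
        intro m
        refine ⟨p, hp, μ + m • x, ?_, by push_cast [Int.cast_smul_eq_zsmul ℝ]; abel⟩
        exact add_mem hμ (zsmul_mem hx m)
      have h0 : (0:ℝ) ≤ t - ⌊t⌋ := sub_nonneg.2 (Int.floor_le t)
      have h1 : t - ⌊t⌋ ≤ 1 := by linarith [Int.lt_floor_add_one t]
      have := hconv (hmem ⌊t⌋) (hmem (⌊t⌋ + 1))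
        (a := 1 - (t - ⌊t⌋)) (b := t - ⌊t⌋) (by linarith) h0 (by ring)
      convert this using 1
      push_cast
      module
    | zero => intro t q hq; simpa using hq
    | add x y hx hy ihx ihy =>
      intro t q hq
      have := ihy t _ (ihx t q hq)
      convert this using 1
      rw [smul_add]; abel
    | smul a x hx ih =>
      intro t q hq
      have := ih (t * a) q hq
      convert this using 2
      rw [smul_smul]
  have hker : ∀ x, x - π x ∈ V₁ := by
    intro x
    rw [← Submodule.linearProjOfIsCompl_apply_eq_zero_iff hcompl]
    simp [hπ, map_sub, Submodule.linearProjOfIsCompl, -Submodule.coe_projectionOnto_apply, Submodule.projectionOnto_apply_left hcompl]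
  have hπV₁ : ∀ x ∈ V₁, π x = 0 := fun x hx => by
    simp [hπ, Submodule.linearProjOfIsCompl, hx]
  ext x
  constructor
  · rintro ⟨p, hp, μ, hμ, rfl⟩
    have hμV : μ ∈ V₁ := hV₁ ▸ Submodule.subset_span hμ
    refine ⟨p + μ - π p, ?_, π p, ⟨p, hp, rfl⟩, by abel⟩
    have : π (p + μ) = π p := by
      simp only [hπ, map_add, Submodule.linearProjOfIsCompl, Submodule.projectionOnto_apply_of_mem_right hcompl hμV]
      push_cast
      simp
    have h2 := hker (p + μ)
    rw [this] at h2
    exact h2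
  · rintro ⟨v, hv, -, ⟨p, hp, rfl⟩, rfl⟩
    have hp' : p ∈ Q := ⟨p, hp, 0, zero_mem _, add_zero p⟩
    have hw : v - (p - π p) ∈ V₁ := sub_mem hv (hker p)
    have := key _ hw 1 p hp'
    rw [one_smul] at this
    convert this using 1
    abel
end

section
/- Let V = V₁ ⊕ V₂ be a direct sum decomposition of ℝ^d into linear subspaces, let P ⊆ ℝ^d be a compact convex set, and let Λ₁ ⊆ V₁ be a lattice of full rank in V₁. If the set P + Λ₁ is convex, then P + Λ₁ = V₁ + π(P), where π : ℝ^d → V₂ is the projection along V₁. -/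
open Pointwise

private lemma span_subset_convexHull_of_addSubgroup
    {E : Type*} [AddCommGroup E] [Module ℝ E] (Λ : AddSubgroup E) :
    ((Submodule.span ℝ (Λ : Set E)) : Set E) ⊆ convexHull ℝ (Λ : Set E) := by
  set C := convexHull ℝ (Λ : Set E) with hC
  have hCconv : Convex ℝ C := convex_convexHull ℝ _
  have h0 : (0 : E) ∈ C := subset_convexHull ℝ _ Λ.zero_mem
  have hnegset : -(Λ : Set E) = (Λ : Set E) := by
    ext y; simp [Set.mem_neg, neg_mem_iff]
  have hneg : ∀ x ∈ C, -x ∈ C := by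
    intro x hx
    have : -C = C := by rw [hC, ← convexHull_neg, hnegset]
    rw [← this]
    simpa using hx
  have h2 : ∀ x ∈ C, (2 : ℝ) • x ∈ C := by
    intro x hx
    have hsub : (2 : ℝ) • (Λ : Set E) ⊆ (Λ : Set E) := by
      rintro _ ⟨a, ha, rfl⟩
      show (2 : ℝ) • a ∈ (Λ : Set E)
      have : (2 : ℝ) • a = a + a := by module
      rw [this]; exact add_mem ha ha
    have : (2 : ℝ) • x ∈ (2 : ℝ) • C := Set.smul_mem_smul_set hx
    rw [hC, ← convexHull_smul] at this
    exact convexHull_mono hsub this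
  have hadd : ∀ x ∈ C, ∀ y ∈ C, x + y ∈ C := by
    intro x hx y hy
    have hm : (1 / 2 : ℝ) • x + (1 / 2 : ℝ) • y ∈ C :=
      hCconv hx hy (by norm_num) (by norm_num) (by norm_num)
    have h := h2 _ hm
    have heq : (2 : ℝ) • ((1 / 2 : ℝ) • x + (1 / 2 : ℝ) • y) = x + y := by module
    rwa [heq] at h
  have hsmul1 : ∀ (t : ℝ), -1 ≤ t → t ≤ 1 → ∀ x ∈ C, t • x ∈ C := by
    intro t ht1 ht2 x hx
    have h := hCconv (hneg x hx) hx (a := (1 - t) / 2) (b := (1 + t) / 2)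
      (by linarith) (by linarith) (by ring)
    have heq : ((1 - t) / 2) • (-x) + ((1 + t) / 2) • x = t • x := by module
    rwa [heq] at h
  have hnsmul : ∀ (n : ℕ) (x : E), x ∈ C → (n : ℝ) • x ∈ C := by
    intro n
    induction n with
    | zero => intro x _; simpa using h0
    | succ n ih =>
        intro x hx
        have : ((n + 1 : ℕ) : ℝ) • x = (n : ℝ) • x + x := by push_cast; module
        rw [this]
        exact hadd _ (ih x hx) _ hx
  have hsmul : ∀ (c : ℝ) (x : E), x ∈ C → c • x ∈ C := by
    intro c x hx
    set n : ℕ := ⌈|c|⌉₊ + 1 with hn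
    have hnpos : (0 : ℝ) < (n : ℝ) := by positivity
    have hcn : |c| ≤ (n : ℝ) := by
      have := Nat.le_ceil |c|
      push_cast [hn]
      push_cast at this
      linarith
    have hdiv : |c / n| ≤ 1 := by
      rw [abs_div, abs_of_pos hnpos, div_le_one hnpos]
      exact hcn
    have h1 : (n : ℝ) • x ∈ C := hnsmul n x hx
    have h2' : (c / n) • ((n : ℝ) • x) ∈ C :=
      hsmul1 _ (neg_le_of_abs_le hdiv) (le_of_abs_le hdiv) _ h1
    have heq : (c / n) • ((n : ℝ) • x) = c • x := by
      rw [smul_smul, div_mul_cancel₀]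
      exact ne_of_gt hnpos
    rwa [heq] at h2'
  intro x hx
  refine Submodule.span_induction (fun y hy => subset_convexHull ℝ _ hy) h0
    (fun a b _ _ ha hb => hadd a ha b hb) (fun r a _ ha => hsmul r a ha) hx

/-- If `ℝ^d = V₁ ⊕ V₂`, `P` is compact convex, `Λ₁` a full-rank lattice in `V₁`,
and `P + Λ₁` is convex, then `P + Λ₁ = V₁ + π(P)` with `π` the projection onto
`V₂` along `V₁`. -/
theorem stmt11 (d : ℕ)
    (V₁ V₂ : Submodule ℝ (EuclideanSpace ℝ (Fin d)))
    (hcompl : IsCompl V₂ V₁)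
    (P : Set (EuclideanSpace ℝ (Fin d)))
    (hPc : IsCompact P) (hPconv : Convex ℝ P)
    (Λ₁ : AddSubgroup (EuclideanSpace ℝ (Fin d)))
    (hΛsub : (Λ₁ : Set (EuclideanSpace ℝ (Fin d))) ⊆ (V₁ : Set (EuclideanSpace ℝ (Fin d))))
    (hdisc : DiscreteTopology Λ₁)
    (hfull : Submodule.span ℝ (Λ₁ : Set (EuclideanSpace ℝ (Fin d))) = V₁)
    (hconv : Convex ℝ (P + (Λ₁ : Set (EuclideanSpace ℝ (Fin d))))) :
    P + (Λ₁ : Set (EuclideanSpace ℝ (Fin d))) =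
      (V₁ : Set (EuclideanSpace ℝ (Fin d))) +
        (fun x => ((Submodule.linearProjOfIsCompl V₂ V₁ hcompl) x :
          EuclideanSpace ℝ (Fin d))) '' P := by
  set π := Submodule.linearProjOfIsCompl V₂ V₁ hcompl with hπ
  have hker : ∀ x : EuclideanSpace ℝ (Fin d), x - (π x : EuclideanSpace ℝ (Fin d)) ∈ V₁ := by
    intro x
    rw [← Submodule.projectionOnto_apply_eq_zero_iff (h := hcompl)]
    rw [map_sub]
    simp [hπ, Submodule.linearProjOfIsCompl, Submodule.projectionOnto_apply_left, Submodule.projectionOnto_projection]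
  ext x
  constructor
  · rintro ⟨p, hp, l, hl, rfl⟩
    refine ⟨(p - (π p : EuclideanSpace ℝ (Fin d))) + l,
      V₁.add_mem (hker p) (hΛsub hl), (π p : EuclideanSpace ℝ (Fin d)), ⟨p, hp, rfl⟩, by abel⟩
  · rintro ⟨v, hv, _, ⟨p, hp, rfl⟩, rfl⟩
    have hw : v - (p - (π p : EuclideanSpace ℝ (Fin d))) ∈ V₁ := V₁.sub_mem hv (hker p)
    have hwhull : v - (p - (π p : EuclideanSpace ℝ (Fin d))) ∈
        convexHull ℝ (Λ₁ : Set (EuclideanSpace ℝ (Fin d))) := by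
      apply span_subset_convexHull_of_addSubgroup
      rw [hfull]; exact hw
    have hx : v + (π p : EuclideanSpace ℝ (Fin d)) ∈
        {p} + convexHull ℝ (Λ₁ : Set (EuclideanSpace ℝ (Fin d))) :=
      ⟨p, rfl, v - (p - (π p : EuclideanSpace ℝ (Fin d))), hwhull, by abel⟩
    have heq : {p} + convexHull ℝ (Λ₁ : Set (EuclideanSpace ℝ (Fin d))) =
        convexHull ℝ ({p} + (Λ₁ : Set (EuclideanSpace ℝ (Fin d)))) := by
      rw [convexHull_add, convexHull_singleton]
    rw [heq] at hx
    have : convexHull ℝ ({p} + (Λ₁ : Set (EuclideanSpace ℝ (Fin d)))) ⊆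
        P + (Λ₁ : Set (EuclideanSpace ℝ (Fin d))) := by
      rw [← hconv.convexHull_eq]
      exact convexHull_mono (Set.add_subset_add_right (by simpa using hp))
    exact this hx
end
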